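/- arXiv:1005.1744 — 9 statements merged into one kernel-verified Lean document; each statement's English description precedes it below -/
import Mathlib

section
/- Let P be an n×l binary matrix and Q an n×l' binary matrix (with the same number n of rows). Then C(P) = C(Q) as subsets of F₂ⁿ if and only if P and Q determine the same binary matroid on the row set, i.e. for every subset X ⊆ {1,…,n}, the F₂-rank of the submatrix of P consisting of the rows indexed by X equals the F₂-rank of the submatrix of Q consisting of the rows indexed by X. -/
open Matrix BigOperators Finset

noncomputable section

/-- The binary code generated by the columns of `P`: all vectors `P·s`. -/
def code {m : Type*} [Fintype m] {l : ℕ} (P : Matrix m (Fin l) (ZMod 2)) :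
    Finset (m → ZMod 2) :=
  Finset.image P.mulVec Finset.univ

/-- Rank function of the binary matroid of `P`: the F₂-rank of the submatrix of
rows indexed by `X`. -/
def rho {m : Type*} [Fintype m] {l : ℕ} (P : Matrix m (Fin l) (ZMod 2)) (X : Finset m) : ℕ :=
  (P.submatrix (fun i : {i // i ∈ X} => (i : m)) id).rank

/-- Tutte polynomial of the binary matroid of `P`. -/
def tutte {m : Type*} [Fintype m] {l : ℕ} (P : Matrix m (Fin l) (ZMod 2)) (x y : ℂ) : ℂ :=
  ∑ X ∈ (Finset.univ : Finset m).powerset,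
    (x - 1) ^ (rho P Finset.univ - rho P X) * (y - 1) ^ (X.card - rho P X)

/-- Normalised weight enumerator. -/
def alpha {m : Type*} [Fintype m] {l : ℕ} (P : Matrix m (Fin l) (ZMod 2)) (θ : ℝ) : ℂ :=
  (2 : ℂ) ^ (-(P.rank : ℤ)) *
    ∑ c ∈ code P, Complex.exp (Complex.I * θ * ((Fintype.card m : ℂ) - 2 * (hammingNorm c : ℂ)))

/-- The IQP probability distribution of an X-program `(P, θ)`. -/
def iqpProb {n l : ℕ} (P : Matrix (Fin n) (Fin l) (ZMod 2)) (θ : ℝ) (x : Fin l → ZMod 2) : ℝ :=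
  ‖(2 : ℂ) ^ (-(l : ℤ)) *
    ∑ a : Fin l → ZMod 2, (-1 : ℂ) ^ (x ⬝ᵥ a).val *
      Complex.exp (Complex.I * θ * ∑ j, (-1 : ℂ) ^ ((P j) ⬝ᵥ a).val)‖ ^ 2

/-- Affinification: the submatrix of rows `P_j` with `P_j ⬝ s = 1`. -/
def affin {n l : ℕ} (P : Matrix (Fin n) (Fin l) (ZMod 2)) (s : Fin l → ZMod 2) :
    Matrix {j : Fin n // (P j) ⬝ᵥ s = 1} (Fin l) (ZMod 2) :=
  Matrix.of fun j k => P j.1 k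


namespace CodeAux

variable {m : Type*} [Fintype m] [DecidableEq m] {l : ℕ}

lemma mem_code {P : Matrix m (Fin l) (ZMod 2)} {c : m → ZMod 2} :
    c ∈ code P ↔ c ∈ LinearMap.range P.mulVecLin := by
  simp [code, LinearMap.mem_range, eq_comm]

lemma rho_eq_finrank (P : Matrix m (Fin l) (ZMod 2)) (X : Finset m) :
    rho P X = Module.finrank (ZMod 2)
      ((LinearMap.range P.mulVecLin).map
        (LinearMap.funLeft (ZMod 2) (ZMod 2) (fun i : {i // i ∈ X} => (i : m)))) := by
  have h : (P.submatrix (fun i : {i // i ∈ X} => (i : m)) id).mulVecLin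
      = (LinearMap.funLeft (ZMod 2) (ZMod 2) (fun i : {i // i ∈ X} => (i : m))).comp
          P.mulVecLin := by
    ext v j
    simp [Matrix.mulVec, dotProduct, LinearMap.funLeft, Pi.single_apply, mul_ite]
  unfold rho Matrix.rank
  rw [h, LinearMap.range_comp]

lemma finrank_range_eq (P : Matrix m (Fin l) (ZMod 2)) :
    Module.finrank (ZMod 2) (LinearMap.range P.mulVecLin) = rho P Finset.univ := by
  rw [rho_eq_finrank]
  have hsurj : Function.Surjective (fun i : {i // i ∈ (Finset.univ : Finset m)} => (i : m)) :=
    fun i => ⟨⟨i, Finset.mem_univ i⟩, rfl⟩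
  have hinj := LinearMap.funLeft_injective_of_surjective (ZMod 2) (ZMod 2) _ hsurj
  exact (Submodule.equivMapOfInjective _ hinj _).finrank_eq

set_option synthInstance.maxHeartbeats 1000000 in
set_option maxHeartbeats 1000000 in
lemma card_filter (P : Matrix m (Fin l) (ZMod 2)) (X : Finset m) :
    ((code P).filter (fun c => ∀ i ∈ X, c i = 0)).card
      = 2 ^ (rho P Finset.univ - rho P X) := by
  classical
  set V := LinearMap.range P.mulVecLin with hV
  set g : {i // i ∈ X} → m := fun i => (i : m)
  set φ : V →ₗ[ZMod 2] ({i // i ∈ X} → ZMod 2) :=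
    (LinearMap.funLeft (ZMod 2) (ZMod 2) g).comp V.subtype with hφ
  have hrange : LinearMap.range φ = V.map (LinearMap.funLeft (ZMod 2) (ZMod 2) g) := by
    rw [hφ, LinearMap.range_comp, Submodule.range_subtype]
  -- card of kernel
  have e : {c : m → ZMod 2 // c ∈ (code P).filter (fun c => ∀ i ∈ X, c i = 0)}
      ≃ LinearMap.ker φ := by
    refine ⟨fun c => ⟨⟨c.1, mem_code.mp (Finset.mem_filter.mp c.2).1⟩, ?_⟩,
      fun v => ⟨v.1.1, ?_⟩, fun c => rfl, fun v => rfl⟩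
    · have hz := (Finset.mem_filter.mp c.2).2
      ext i
      exact hz i i.2
    · refine Finset.mem_filter.mpr ⟨mem_code.mpr v.1.2, fun i hi => ?_⟩
      have := v.2
      rw [LinearMap.mem_ker] at this
      exact congrFun this ⟨i, hi⟩
  haveI : Finite (LinearMap.ker φ) := Subtype.finite
  haveI : Fintype (LinearMap.ker φ) := Fintype.ofFinite (LinearMap.ker φ)
  have hcard : ((code P).filter (fun c => ∀ i ∈ X, c i = 0)).card
      = Fintype.card (LinearMap.ker φ) := by
    rw [← Fintype.card_coe]
    exact Fintype.card_congr e
  have hker : Fintype.card (LinearMap.ker φ)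
      = 2 ^ Module.finrank (ZMod 2) (LinearMap.ker φ) := by
    have := Module.card_eq_pow_finrank (K := ZMod 2) (V := LinearMap.ker φ)
    simpa [ZMod.card] using this
  have hrn : Module.finrank (ZMod 2) (LinearMap.range φ)
      + Module.finrank (ZMod 2) (LinearMap.ker φ) = Module.finrank (ZMod 2) V :=
    LinearMap.finrank_range_add_finrank_ker φ
  have h1 : Module.finrank (ZMod 2) (LinearMap.range φ) = rho P X := by
    rw [hrange, rho_eq_finrank]
  have h2 : Module.finrank (ZMod 2) V = rho P Finset.univ := finrank_range_eq P
  have h3 : Module.finrank (ZMod 2) (LinearMap.ker φ) = rho P Finset.univ - rho P X := by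
    rw [← h1, ← h2]
    exact (Nat.eq_sub_of_add_eq' hrn).symm ▸ rfl
  rw [hcard, hker, h3]

end CodeAux

namespace CodeAux2
open CodeAux

variable {m : Type*} [Fintype m] [DecidableEq m] {l : ℕ}

def zset (c : m → ZMod 2) : Finset m := Finset.univ.filter (fun i => c i = 0)

lemma eq_of_zset_eq {c d : m → ZMod 2} (h : zset c = zset d) : c = d := by
  funext i
  have hc : ∀ a : ZMod 2, a = 0 ∨ a = 1 := by decide
  have h1 : (i ∈ zset c) ↔ (i ∈ zset d) := by rw [h]
  simp only [zset, Finset.mem_filter, Finset.mem_univ, true_and] at h1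
  rcases hc (c i) with h2 | h2 <;> rcases hc (d i) with h3 | h3 <;> simp_all

lemma fcard_eq_sum (P : Matrix m (Fin l) (ZMod 2)) (T : Finset m) :
    ((code P).filter (fun c => ∀ i ∈ T, c i = 0)).card
      = ∑ S ∈ Finset.univ.powerset.filter (fun S => T ⊆ S),
          ((code P).filter (fun c => zset c = S)).card := by
  have hmem : ∀ c ∈ (code P).filter (fun c => ∀ i ∈ T, c i = 0),
      zset c ∈ Finset.univ.powerset.filter (fun S => T ⊆ S) := by
    intro c hc
    simp only [Finset.mem_filter] at hc
    refine Finset.mem_filter.mpr ⟨Finset.mem_powerset.mpr (Finset.subset_univ _),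
      fun i hi => ?_⟩
    simp [zset, hc.2 i hi]
  rw [Finset.card_eq_sum_card_fiberwise hmem]
  refine Finset.sum_congr rfl fun S hS => ?_
  rw [Finset.filter_filter]
  simp only [Finset.mem_filter, Finset.mem_powerset] at hS
  refine congrArg Finset.card (Finset.filter_congr fun c _ => ?_)
  constructor
  · rintro ⟨_, h2⟩; exact h2
  · intro h2
    refine ⟨fun i hi => ?_, h2⟩
    have hz : i ∈ zset c := h2 ▸ hS.2 hi
    simpa [zset] using hz

lemma ecard_eq {l' : ℕ} (P : Matrix m (Fin l) (ZMod 2)) (Q : Matrix m (Fin l') (ZMod 2))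
    (h : ∀ X : Finset m, rho P X = rho Q X) (T : Finset m) :
    ((code P).filter (fun c => zset c = T)).card
      = ((code Q).filter (fun c => zset c = T)).card := by
  have hf : ∀ X : Finset m, ((code P).filter (fun c => ∀ i ∈ X, c i = 0)).card
      = ((code Q).filter (fun c => ∀ i ∈ X, c i = 0)).card := by
    intro X
    rw [CodeAux.card_filter, CodeAux.card_filter, h, h]
  have key : ∀ k : ℕ, ∀ T : Finset m, (Finset.univ \ T).card ≤ k →
      ((code P).filter (fun c => zset c = T)).card
        = ((code Q).filter (fun c => zset c = T)).card := by
    intro k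
    induction k with
    | zero =>
      intro T hT
      have hTu : T = Finset.univ := by
        have h0 := Finset.card_eq_zero.mp (Nat.le_zero.mp hT)
        have h2 : Finset.univ ⊆ T := by
          intro i _
          by_contra hi
          have hmem : i ∈ Finset.univ \ T := Finset.mem_sdiff.mpr ⟨Finset.mem_univ i, hi⟩
          rw [h0] at hmem
          exact absurd hmem (Finset.notMem_empty i)
        exact Finset.univ_subset_iff.mp h2
      subst hTu
      have heq : ∀ (c : m → ZMod 2), zset c = Finset.univ ↔ ∀ i ∈ Finset.univ, c i = 0 := by
        intro c
        rw [Finset.eq_univ_iff_forall]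
        simp [zset]
      rw [Finset.filter_congr (fun c _ => heq c), Finset.filter_congr (fun c _ => heq c)]
      exact hf Finset.univ
    | succ k ih =>
      intro T hT
      have hTt : T ∈ Finset.univ.powerset.filter (fun S => T ⊆ S) :=
        Finset.mem_filter.mpr ⟨Finset.mem_powerset.mpr (Finset.subset_univ _), le_refl T⟩
      have hsP := Finset.add_sum_erase _
        (fun S => ((code P).filter (fun c => zset c = S)).card) hTt
      have hsQ := Finset.add_sum_erase _
        (fun S => ((code Q).filter (fun c => zset c = S)).card) hTt
      have hsums : ∑ S ∈ (Finset.univ.powerset.filter (fun S => T ⊆ S)).erase T,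
            ((code P).filter (fun c => zset c = S)).card
          = ∑ S ∈ (Finset.univ.powerset.filter (fun S => T ⊆ S)).erase T,
            ((code Q).filter (fun c => zset c = S)).card := by
        refine Finset.sum_congr rfl fun S hS => ?_
        have hS' := Finset.mem_of_mem_erase hS
        simp only [Finset.mem_filter, Finset.mem_powerset] at hS'
        have hne := Finset.ne_of_mem_erase hS
        have hlt : T.card < S.card :=
          Finset.card_lt_card (lt_of_le_of_ne hS'.2 (Ne.symm hne))
        apply ih
        have e1 : (Finset.univ \ S).card = Fintype.card m - S.card := by
          rw [Finset.card_sdiff_of_subset (Finset.subset_univ _), Finset.card_univ]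
        have e2 : (Finset.univ \ T).card = Fintype.card m - T.card := by
          rw [Finset.card_sdiff_of_subset (Finset.subset_univ _), Finset.card_univ]
        have e3 : S.card ≤ Fintype.card m := by
          rw [← Finset.card_univ]; exact Finset.card_le_card (Finset.subset_univ _)
        omega
      have hfT := hf T
      rw [fcard_eq_sum, fcard_eq_sum, ← hsP, ← hsQ, hsums] at hfT
      exact Nat.add_right_cancel hfT
  exact key (Finset.univ \ T).card T le_rfl

lemma code_subset {l' : ℕ} (P : Matrix m (Fin l) (ZMod 2)) (Q : Matrix m (Fin l') (ZMod 2))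
    (h : ∀ X : Finset m, rho P X = rho Q X) : code P ⊆ code Q := by
  intro c hcP
  have h0 : 0 < ((code P).filter (fun d => zset d = zset c)).card :=
    Finset.card_pos.mpr ⟨c, Finset.mem_filter.mpr ⟨hcP, rfl⟩⟩
  rw [ecard_eq P Q h] at h0
  obtain ⟨d, hd⟩ := Finset.card_pos.mp h0
  rw [Finset.mem_filter] at hd
  exact (eq_of_zset_eq hd.2) ▸ hd.1

end CodeAux2

/-- `C(P) = C(Q)` iff `P` and `Q` determine the same binary matroid on the
row set, i.e. every subset of rows has the same F₂-rank in `P` as in `Q`. -/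
theorem code_eq_iff_same_matroid {n l l' : ℕ}
    (P : Matrix (Fin n) (Fin l) (ZMod 2)) (Q : Matrix (Fin n) (Fin l') (ZMod 2)) :
    code P = code Q ↔ ∀ X : Finset (Fin n), rho P X = rho Q X := by
  constructor
  · intro hc X
    have hr : LinearMap.range P.mulVecLin = LinearMap.range Q.mulVecLin := by
      ext c
      rw [← CodeAux.mem_code, ← CodeAux.mem_code, hc]
    rw [CodeAux.rho_eq_finrank, CodeAux.rho_eq_finrank, hr]
  · intro h
    exact Finset.Subset.antisymm (CodeAux2.code_subset P Q h)
      (CodeAux2.code_subset Q P (fun X => (h X).symm))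

end
end

section
/- (Greene's theorem.) Let P be an n×l binary matrix, let C = C(P) with rank r, and let M(P) be the associated binary matroid. Then for every complex number ζ with ζ ≠ 0 and ζ ≠ 1: W_C(ζ) = ζ^{n−r} · (1−ζ)^r · T_{M(P)}( (1+ζ)/(1−ζ), 1/ζ ). -/
open Matrix BigOperators Finset

noncomputable section

namespace GreeneAux

variable {n l : ℕ} (P : Matrix (Fin n) (Fin l) (ZMod 2))

/-- restriction map to coordinates in X -/
abbrev res (X : Finset (Fin n)) : ((Fin n) → ZMod 2) →ₗ[ZMod 2] ({i // i ∈ X} → ZMod 2) :=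
  LinearMap.funLeft (ZMod 2) (ZMod 2) Subtype.val

lemma rho_eq (X : Finset (Fin n)) :
    rho P X = Module.finrank (ZMod 2)
      (LinearMap.range ((res X) ∘ₗ P.mulVecLin)) := by
  unfold rho Matrix.rank
  congr 1

lemma mem_code (c : Fin n → ZMod 2) :
    c ∈ code P ↔ c ∈ LinearMap.range P.mulVecLin := by
  simp [code, LinearMap.mem_range, Matrix.mulVecLin, eq_comm]

lemma rank_eq : P.rank = Module.finrank (ZMod 2) (LinearMap.range P.mulVecLin) := rfl

lemma rho_le_rank (X : Finset (Fin n)) : rho P X ≤ P.rank := by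
  rw [rho_eq, rank_eq, LinearMap.range_comp]
  exact Submodule.finrank_map_le _ _

lemma rho_le_card (X : Finset (Fin n)) : rho P X ≤ X.card := by
  have h := Matrix.rank_le_card_height (P.submatrix (fun i : {i // i ∈ X} => (i : Fin n)) id)
  simpa [rho] using h

lemma rho_univ : rho P (Finset.univ : Finset (Fin n)) = P.rank := by
  rw [rho_eq, rank_eq, LinearMap.range_comp]
  exact (Submodule.equivMapOfInjective _
    (LinearMap.funLeft_injective_of_surjective (ZMod 2) (ZMod 2) _
      (fun i => ⟨⟨i, Finset.mem_univ i⟩, rfl⟩)) _).finrank_eq.symm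

open Module in
lemma finrank_inf (X : Finset (Fin n)) :
    Module.finrank (ZMod 2)
      ↥(LinearMap.range P.mulVecLin ⊓ LinearMap.ker (res X)) = P.rank - rho P X := by
  classical
  set f := res (n := n) X with hf
  set C := LinearMap.range P.mulVecLin with hC
  have hker : LinearMap.ker (f.domRestrict C) = Submodule.comap C.subtype (C ⊓ LinearMap.ker f) := by
    rw [LinearMap.ker_domRestrict]
    ext x
    simp
  have e : Submodule.comap C.subtype (C ⊓ LinearMap.ker f) ≃ₗ[ZMod 2]
      ↥(C ⊓ LinearMap.ker f) := Submodule.comapSubtypeEquivOfLe inf_le_left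
  have hrange : LinearMap.range (f.domRestrict C) = LinearMap.range (f ∘ₗ P.mulVecLin) := by
    rw [LinearMap.range_domRestrict, LinearMap.range_comp]
  have hrn := LinearMap.finrank_range_add_finrank_ker (f.domRestrict C)
  rw [hrange, hker, e.finrank_eq] at hrn
  rw [← rho_eq] at hrn
  have : finrank (ZMod 2) ↥C = P.rank := rfl
  omega

open Module in
lemma card_filter (X : Finset (Fin n)) :
    ((code P).filter (fun c => ∀ i ∈ X, c i = 0)).card = 2 ^ (P.rank - rho P X) := by
  classical
  set W := LinearMap.range P.mulVecLin ⊓ LinearMap.ker (res (n := n) X) with hW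
  have hset : (((code P).filter (fun c => ∀ i ∈ X, c i = 0)) : Set (Fin n → ZMod 2))
      = ↑W := by
    ext c
    simp only [Finset.coe_filter, Set.mem_setOf_eq, SetLike.mem_coe, hW, Submodule.mem_inf,
      LinearMap.mem_ker, mem_code]
    refine and_congr Iff.rfl ?_
    constructor
    · intro h
      ext j
      exact h j.1 j.2
    · intro h i hi
      exact congrFun h ⟨i, hi⟩
  have h1 : ((code P).filter (fun c => ∀ i ∈ X, c i = 0)).card = Nat.card ↥W := by
    rw [← Set.ncard_coe_finset, hset, ← Nat.card_coe_set_eq]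
    rfl
  rw [h1, Nat.card_eq_fintype_card, card_eq_pow_finrank (K := ZMod 2), ZMod.card,
    finrank_inf]

end GreeneAux

/-- Greene's theorem: for `ζ ≠ 0, 1`,
`W_C(ζ) = ζ^(n−r) · (1−ζ)^r · T_{M(P)}((1+ζ)/(1−ζ), 1/ζ)`. -/
theorem greene {n l : ℕ} (P : Matrix (Fin n) (Fin l) (ZMod 2)) (ζ : ℂ)
    (hζ0 : ζ ≠ 0) (hζ1 : ζ ≠ 1) :
    ∑ c ∈ code P, ζ ^ hammingNorm c =
      ζ ^ (n - P.rank) * (1 - ζ) ^ P.rank *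
        tutte P ((1 + ζ) / (1 - ζ)) (1 / ζ) := by
  classical
  have h1ζ : (1:ℂ) - ζ ≠ 0 := sub_ne_zero.mpr (Ne.symm hζ1)
  have hrn : P.rank ≤ n := by simpa using Matrix.rank_le_card_height P
  rw [tutte, Finset.mul_sum, GreeneAux.rho_univ]
  have step2 : ∀ X ∈ (Finset.univ : Finset (Fin n)).powerset,
      ζ ^ (n - P.rank) * (1 - ζ) ^ P.rank *
        (((1+ζ)/(1-ζ) - 1) ^ (P.rank - rho P X) * ((1/ζ) - 1) ^ (X.card - rho P X))
      = (2:ℂ) ^ (P.rank - rho P X) * (ζ ^ (n - X.card) * (1-ζ) ^ X.card) := by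
    intro X hX
    have hXn : X.card ≤ n := by
      simpa using Finset.card_le_card (Finset.mem_powerset.mp hX)
    have hρr := GreeneAux.rho_le_rank P X
    have hρX := GreeneAux.rho_le_card P X
    have e1 : (1+ζ)/(1-ζ) - 1 = 2*ζ/(1-ζ) := by field_simp; ring
    have e2 : (1:ℂ)/ζ - 1 = (1-ζ)/ζ := by field_simp
    set a := P.rank - rho P X with ha
    set b := X.card - rho P X with hb
    rw [e1, e2, div_pow, div_pow, mul_pow, div_mul_div_comm, ← mul_div_assoc,
      div_eq_iff (mul_ne_zero (pow_ne_zero _ h1ζ) (pow_ne_zero _ hζ0))]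
    have hz : ζ ^ (n - P.rank) * ζ ^ a = ζ ^ (n - X.card) * ζ ^ b := by
      rw [← pow_add, ← pow_add]; congr 1; omega
    have ho : (1-ζ) ^ P.rank * (1-ζ) ^ b = (1-ζ) ^ X.card * (1-ζ) ^ a := by
      rw [← pow_add, ← pow_add]; congr 1; omega
    calc ζ ^ (n - P.rank) * (1 - ζ) ^ P.rank * ((2:ℂ) ^ a * ζ ^ a * (1 - ζ) ^ b)
        = (ζ ^ (n - P.rank) * ζ ^ a) * ((1-ζ) ^ P.rank * (1-ζ) ^ b) * 2 ^ a := by ring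
      _ = (ζ ^ (n - X.card) * ζ ^ b) * ((1-ζ) ^ X.card * (1-ζ) ^ a) * 2 ^ a := by
          rw [hz, ho]
      _ = 2 ^ a * (ζ ^ (n - X.card) * (1 - ζ) ^ X.card) * ((1 - ζ) ^ a * ζ ^ b) := by ring
  rw [Finset.sum_congr rfl step2]
  have step3 : ∀ X : Finset (Fin n),
      ((2:ℂ)) ^ (P.rank - rho P X)
        = (((code P).filter (fun c => ∀ i ∈ X, c i = 0)).card : ℂ) := by
    intro X
    rw [GreeneAux.card_filter]
    push_cast
    ring
  calc ∑ c ∈ code P, ζ ^ hammingNorm c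
      = ∑ c ∈ code P, ∑ X ∈ (Finset.univ : Finset (Fin n)).powerset,
          (if (∀ i ∈ X, c i = 0) then ζ ^ (n - X.card) * (1-ζ) ^ X.card else 0) := by
        refine Finset.sum_congr rfl fun c _ => ?_
        set Z := Finset.univ.filter (fun i => c i = 0) with hZdef
        have hZcard : Z.card + hammingNorm c = n := by
          have h := Finset.card_filter_add_card_filter_not
            (s := (Finset.univ : Finset (Fin n))) (p := fun i => c i = 0)
          have hh : hammingNorm c = (Finset.univ.filter (fun i => ¬ (c i = 0))).card := by
            simp [hammingNorm, Finset.filter_congr]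
          rw [hh]
          simpa using h
        have hfil : (Finset.univ : Finset (Fin n)).powerset.filter
            (fun X => ∀ i ∈ X, c i = 0) = Z.powerset := by
          ext Y
          simp [Finset.mem_powerset, Finset.subset_iff, hZdef]
        rw [← Finset.sum_filter, hfil]
        have key : ∑ X ∈ Z.powerset, ζ ^ (n - X.card) * (1-ζ) ^ X.card
            = ζ ^ hammingNorm c *
              ∑ X ∈ Z.powerset, (1-ζ) ^ X.card * ζ ^ (Z.card - X.card) := by
          rw [Finset.mul_sum]
          refine Finset.sum_congr rfl fun X hX => ?_
          have hXZ : X.card ≤ Z.card := Finset.card_le_card (Finset.mem_powerset.mp hX)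
          have hexp : n - X.card = hammingNorm c + (Z.card - X.card) := by omega
          rw [hexp, pow_add]
          ring
        rw [key]
        have hprod := Finset.prod_add (fun _ : Fin n => (1-ζ)) (fun _ => ζ) Z
        have hone : (1:ℂ) = ∑ X ∈ Z.powerset, (1-ζ) ^ X.card * ζ ^ (Z.card - X.card) := by
          calc (1:ℂ) = ∏ _i ∈ Z, ((1-ζ) + ζ) := by simp
          _ = ∑ X ∈ Z.powerset, (∏ _i ∈ X, (1-ζ)) * ∏ _i ∈ Z \ X, ζ := hprod
          _ = ∑ X ∈ Z.powerset, (1-ζ) ^ X.card * ζ ^ (Z.card - X.card) := by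
              refine Finset.sum_congr rfl fun X hX => ?_
              rw [Finset.prod_const, Finset.prod_const,
                Finset.card_sdiff_of_subset (Finset.mem_powerset.mp hX)]
        rw [← hone, mul_one]
      _ = ∑ X ∈ (Finset.univ : Finset (Fin n)).powerset, ∑ c ∈ code P,
          (if (∀ i ∈ X, c i = 0) then ζ ^ (n - X.card) * (1-ζ) ^ X.card else 0) :=
        Finset.sum_comm
      _ = ∑ X ∈ (Finset.univ : Finset (Fin n)).powerset,
          (2:ℂ) ^ (P.rank - rho P X) * (ζ ^ (n - X.card) * (1-ζ) ^ X.card) := by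
        refine Finset.sum_congr rfl fun X _ => ?_
        rw [← Finset.sum_filter, Finset.sum_const, nsmul_eq_mul, ← step3 X]

end
end

section
/- Let P be an n×l binary matrix and s ∈ F₂ˡ, and let P_s be the affinification of P by s. Then every codeword of C(P_s) has even Hamming weight if and only if Pᵀ·P·s = 0 (equivalently, if and only if the column vector P·s is orthogonal to every codeword of C(P)). -/
open Matrix BigOperators Finset

noncomputable section

lemma even_hammingNorm_iff {m : Type*} [Fintype m] (c : m → ZMod 2) :
    Even (hammingNorm c) ↔ ∑ j, c j = 0 := by
  have h1 : (∑ j, c j) = (hammingNorm c : ZMod 2) := by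
    rw [hammingNorm, ← Finset.sum_filter_ne_zero]
    have hone : ∀ j ∈ Finset.univ.filter (fun j => c j ≠ 0), c j = 1 := by
      intro j hj
      have := (Finset.mem_filter.mp hj).2
      revert this
      generalize c j = a
      revert a; decide
    rw [Finset.sum_congr rfl hone]
    simp
  rw [h1, ZMod.natCast_eq_zero_iff, ← even_iff_two_dvd]

lemma key_sum {n l : ℕ} (P : Matrix (Fin n) (Fin l) (ZMod 2)) (s t : Fin l → ZMod 2) :
    (∑ j : {j : Fin n // (P j) ⬝ᵥ s = 1}, (affin P s).mulVec t j)
      = (Pᵀ * P).mulVec s ⬝ᵥ t := by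
  have h1 : (∑ j : {j : Fin n // (P j) ⬝ᵥ s = 1}, (affin P s).mulVec t j)
      = ∑ j ∈ Finset.univ.filter (fun j : Fin n => (P j) ⬝ᵥ s = 1), (P j) ⬝ᵥ t := by
    rw [Finset.sum_subtype (p := fun j : Fin n => (P j) ⬝ᵥ s = 1)
      (Finset.univ.filter (fun j : Fin n => (P j) ⬝ᵥ s = 1))
      (fun x => by simp) (fun j => (P j) ⬝ᵥ t)]
    rfl
  have h2 : (Pᵀ * P).mulVec s ⬝ᵥ t = P.mulVec s ⬝ᵥ P.mulVec t := by
    rw [← Matrix.mulVec_mulVec, Matrix.mulVec_transpose, Matrix.dotProduct_mulVec]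
  rw [h1, h2, Finset.sum_filter]
  apply Finset.sum_congr rfl
  intro j _
  show _ = ((P j) ⬝ᵥ s) * ((P j) ⬝ᵥ t)
  rcases (show ∀ a : ZMod 2, a = 0 ∨ a = 1 by decide) ((P j) ⬝ᵥ s) with h | h <;> simp [h]

/-- every codeword of `C(P_s)` has even Hamming weight iff `Pᵀ·P·s = 0`
(equivalently, iff `P·s` is orthogonal to every codeword of `C(P)`). -/
theorem affin_even_iff {n l : ℕ} (P : Matrix (Fin n) (Fin l) (ZMod 2))
    (s : Fin l → ZMod 2) :
    ((∀ c ∈ code (affin P s), Even (hammingNorm c)) ↔ (Pᵀ * P).mulVec s = 0) ∧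
    ((∀ c ∈ code (affin P s), Even (hammingNorm c)) ↔
      ∀ c ∈ code P, P.mulVec s ⬝ᵥ c = 0) := by
  have heq : (∀ c ∈ code (affin P s), Even (hammingNorm c)) ↔
      ∀ t : Fin l → ZMod 2, (Pᵀ * P).mulVec s ⬝ᵥ t = 0 := by
    constructor
    · intro h t
      rw [← key_sum]
      exact (even_hammingNorm_iff _).mp
        (h _ (Finset.mem_image.mpr ⟨t, Finset.mem_univ _, rfl⟩))
    · intro h c hc
      obtain ⟨t, _, rfl⟩ := Finset.mem_image.mp hc
      rw [even_hammingNorm_iff, key_sum]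
      exact h t
  have hzero : (∀ t : Fin l → ZMod 2, (Pᵀ * P).mulVec s ⬝ᵥ t = 0) ↔
      (Pᵀ * P).mulVec s = 0 := by
    constructor
    · intro h
      funext i
      have := h (Pi.single i 1)
      rwa [dotProduct_single, mul_one] at this
    · intro h t
      rw [h]
      simp [dotProduct]
  refine ⟨heq.trans hzero, heq.trans ?_⟩
  constructor
  · intro h c hc
    obtain ⟨t, _, rfl⟩ := Finset.mem_image.mp hc
    rw [Matrix.dotProduct_mulVec, ← Matrix.mulVec_transpose, Matrix.mulVec_mulVec]
    exact h t
  · intro h t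
    rw [← Matrix.mulVec_mulVec, Matrix.mulVec_transpose, ← Matrix.dotProduct_mulVec]
    exact h _ (Finset.mem_image.mpr ⟨t, Finset.mem_univ _, rfl⟩)

end
end

section
/- Let P be an n×l binary matrix with rows P₁,…,Pₙ, code C(P) of rank r, and let θ be any real angle. Then 2^{−l} · Σ_{s∈F₂ˡ} exp( iθ · Σ_{j=1}^n (−1)^{P_j·s} ) = α_{(P,θ)} = 2^{−r} · Σ_{c∈C(P)} exp( iθ·(n − 2|c|) ). (This is the transition amplitude ⟨0| exp(iθ H_P) |0⟩ of the X-program (P,θ).) -/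
open Matrix BigOperators Finset

noncomputable section

lemma neg_one_pow_val {a : ZMod 2} : (-1 : ℂ) ^ a.val = 1 - 2 * (a.val : ℂ) := by
  fin_cases a <;> norm_num [ZMod.val]

lemma val_eq_ite {a : ZMod 2} : ((a.val : ℕ) : ℂ) = if a ≠ 0 then 1 else 0 := by
  fin_cases a <;> norm_num [ZMod.val]
  · trivial
  · exact fun h => nomatch h

lemma sum_neg_one_pow {n : ℕ} (c : Fin n → ZMod 2) :
    ∑ j, (-1 : ℂ) ^ (c j).val = (n : ℂ) - 2 * (hammingNorm c : ℂ) := by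
  have hn : (hammingNorm c : ℂ) = ∑ j, ((c j).val : ℂ) := by
    rw [hammingNorm, Finset.card_filter]
    push_cast
    exact Finset.sum_congr rfl fun j _ => (val_eq_ite).symm
  simp only [neg_one_pow_val, Finset.sum_sub_distrib, Finset.sum_const, Finset.card_univ,
    Fintype.card_fin, nsmul_eq_mul, mul_one, hn, Finset.mul_sum]

lemma fiber_card {n l : ℕ} (P : Matrix (Fin n) (Fin l) (ZMod 2)) (c : Fin n → ZMod 2)
    (hc : c ∈ code P) :
    (Finset.univ.filter fun s : Fin l → ZMod 2 => P.mulVec s = c).card = 2 ^ (l - P.rank) := by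
  obtain ⟨s0, -, hs0⟩ := Finset.mem_image.mp hc
  have hker : ∀ s : Fin l → ZMod 2, P.mulVec s = c ↔ s - s0 ∈ LinearMap.ker P.mulVecLin := by
    intro s
    simp only [LinearMap.mem_ker, map_sub, Matrix.mulVecLin_apply, hs0, sub_eq_zero]
  haveI : Fintype (LinearMap.ker P.mulVecLin) := Fintype.ofFinite _
  have e : (Finset.univ.filter fun s : Fin l → ZMod 2 => P.mulVec s = c) ≃
      LinearMap.ker P.mulVecLin := by
    refine ⟨fun s => ⟨s.1 - s0, (hker s.1).mp (Finset.mem_filter.mp s.2).2⟩,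
      fun k => ⟨k.1 + s0, Finset.mem_filter.mpr ⟨Finset.mem_univ _, (hker _).mpr (by simp [k.2])⟩⟩,
      fun s => by simp, fun k => by simp⟩
  have hcard : (Finset.univ.filter fun s : Fin l → ZMod 2 => P.mulVec s = c).card =
      Fintype.card (LinearMap.ker P.mulVecLin) := by
    rw [← Fintype.card_coe]
    exact Fintype.card_congr e
  rw [hcard, Module.card_eq_pow_finrank (K := ZMod 2), ZMod.card]
  congr 1
  have := LinearMap.finrank_range_add_finrank_ker (Matrix.mulVecLin P)
  rw [Module.finrank_fintype_fun_eq_card, Fintype.card_fin] at this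
  have hr : P.rank = Module.finrank (ZMod 2) (LinearMap.range P.mulVecLin) := rfl
  omega

/-- the transition amplitude `⟨0|exp(iθH_P)|0⟩` equals `α_{(P,θ)}`:
`2^{−l} · Σ_{s∈F₂ˡ} exp(iθ·Σ_j (−1)^{P_j·s}) = 2^{−r} · Σ_{c∈C(P)} exp(iθ(n−2|c|))`. -/
theorem amplitude_zero_eq_alpha {n l : ℕ} (P : Matrix (Fin n) (Fin l) (ZMod 2)) (θ : ℝ) :
    (2 : ℂ) ^ (-(l : ℤ)) *
        ∑ s : Fin l → ZMod 2,
          Complex.exp (Complex.I * θ * ∑ j, (-1 : ℂ) ^ ((P j) ⬝ᵥ s).val) =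
      (2 : ℂ) ^ (-(P.rank : ℤ)) *
        ∑ c ∈ code P, Complex.exp (Complex.I * θ * ((n : ℂ) - 2 * (hammingNorm c : ℂ))) := by
  have hrle : P.rank ≤ l := by
    simpa using P.rank_le_card_width
  have step1 : ∀ s : Fin l → ZMod 2,
      Complex.exp (Complex.I * θ * ∑ j, (-1 : ℂ) ^ ((P j) ⬝ᵥ s).val) =
      Complex.exp (Complex.I * θ * ((n : ℂ) - 2 * (hammingNorm (P.mulVec s) : ℂ))) := by
    intro s
    rw [← sum_neg_one_pow (P.mulVec s)]
    rfl
  calc (2 : ℂ) ^ (-(l : ℤ)) *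
        ∑ s : Fin l → ZMod 2,
          Complex.exp (Complex.I * θ * ∑ j, (-1 : ℂ) ^ ((P j) ⬝ᵥ s).val)
      = (2 : ℂ) ^ (-(l : ℤ)) * ∑ s : Fin l → ZMod 2,
          Complex.exp (Complex.I * θ * ((n : ℂ) - 2 * (hammingNorm (P.mulVec s) : ℂ))) := by
        rw [Finset.sum_congr rfl fun s _ => step1 s]
    _ = (2 : ℂ) ^ (-(l : ℤ)) * ∑ c ∈ code P,
          ((Finset.univ.filter fun s : Fin l → ZMod 2 => P.mulVec s = c).card : ℂ) •
          Complex.exp (Complex.I * θ * ((n : ℂ) - 2 * (hammingNorm c : ℂ))) := by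
        rw [Finset.sum_comp
          (fun c => Complex.exp (Complex.I * θ * ((n : ℂ) - 2 * (hammingNorm c : ℂ))))
          (fun s => P.mulVec s)]
        simp [code]
    _ = (2 : ℂ) ^ (-(P.rank : ℤ)) *
        ∑ c ∈ code P, Complex.exp (Complex.I * θ * ((n : ℂ) - 2 * (hammingNorm c : ℂ))) := by
        rw [Finset.sum_congr rfl fun c hc => by rw [fiber_card P c hc]]
        simp only [smul_eq_mul]
        rw [← Finset.mul_sum, ← mul_assoc]
        congr 1
        push_cast
        rw [← zpow_natCast (2 : ℂ) (l - P.rank), ← zpow_add₀ (two_ne_zero)]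
        congr 1
        omega


end
end

section
/- Let P be an n×l binary matrix with rows P₁,…,Pₙ, θ a real angle, and s ∈ F₂ˡ. Then the correlation coefficient of the IQP distribution satisfies β_s = 2^{−l} · Σ_{a∈F₂ˡ} exp( 2iθ · Σ_{j : P_j·s = 1} (−1)^{P_j·a} ), where the inner sum ranges over those row indices j for which P_j·s = 1. -/
open Matrix BigOperators Finset

noncomputable section

lemma chi_add (u v : ZMod 2) : (-1:ℂ)^(u+v).val = (-1)^u.val * (-1)^v.val := by
  rw [ZMod.val_add, ← pow_add, ← neg_one_pow_eq_pow_mod_two]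

lemma chi_orth {l : ℕ} (v : Fin l → ZMod 2) :
    ∑ x : Fin l → ZMod 2, (-1:ℂ)^((x ⬝ᵥ v).val) = if v = 0 then (2:ℂ)^l else 0 := by
  split_ifs with h
  · subst h
    simp [dotProduct, Fintype.card_fun]
  · obtain ⟨i, hi⟩ := Function.ne_iff.mp h
    have hvi : v i = 1 := by
      have : ∀ a : ZMod 2, a ≠ 0 → a = 1 := by decide
      exact this _ (by simpa using hi)
    refine Finset.sum_ninvolution (fun x => x + Pi.single i 1) (fun x => ?_) (fun x _ => ?_)
      (fun x => Finset.mem_univ _) (fun x => ?_)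
    · have : (x + Pi.single i 1) ⬝ᵥ v = x ⬝ᵥ v + 1 := by
        rw [add_dotProduct, single_dotProduct, hvi, one_mul]
      rw [this, chi_add]
      norm_num [show ZMod.val (1:ZMod 2) = 1 from rfl]
    · intro hgx
      have := congrFun hgx i
      simp at this
    · ext k
      by_cases hk : k = i <;> simp [hk, Pi.single_apply, add_assoc, CharTwo.add_self_eq_zero]

/-- `β_s = 2^{−l} · Σ_{a∈F₂ˡ} exp(2iθ · Σ_{j : P_j·s = 1} (−1)^{P_j·a})`. -/
theorem beta_eq_restricted_sum {n l : ℕ} (P : Matrix (Fin n) (Fin l) (ZMod 2)) (θ : ℝ)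
    (s : Fin l → ZMod 2) :
    ((∑ x : Fin l → ZMod 2, (-1 : ℝ) ^ (x ⬝ᵥ s).val * iqpProb P θ x : ℝ) : ℂ) =
      (2 : ℂ) ^ (-(l : ℤ)) *
        ∑ a : Fin l → ZMod 2,
          Complex.exp (2 * Complex.I * θ *
            ∑ j ∈ Finset.univ.filter (fun j : Fin n => (P j) ⬝ᵥ s = 1),
              (-1 : ℂ) ^ ((P j) ⬝ᵥ a).val) := by
  classical
  set c : ℂ := (2:ℂ) ^ (-(l:ℤ)) with hc
  set f : (Fin l → ZMod 2) → ℂ :=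
    fun a => Complex.exp (Complex.I * θ * ∑ j, (-1:ℂ)^((P j) ⬝ᵥ a).val) with hf
  -- f is conj-invariant up to negation of exponent; key product identity
  have hconj_f : ∀ b, (starRingEnd ℂ) (f b) =
      Complex.exp (-(Complex.I * θ * ∑ j, (-1:ℂ)^((P j) ⬝ᵥ b).val)) := by
    intro b
    rw [hf, ← Complex.exp_conj]
    congr 1
    rw [_root_.map_mul, _root_.map_mul, Complex.conj_I, Complex.conj_ofReal, map_sum]
    simp only [map_pow, map_neg, _root_.map_one]
    ring
  -- step 1: cast of iqpProb
  have key : ∀ x : Fin l → ZMod 2, ((iqpProb P θ x : ℝ) : ℂ) =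
      ∑ a : Fin l → ZMod 2, ∑ b : Fin l → ZMod 2,
        (c * c * (f a * (starRingEnd ℂ) (f b))) *
          ((-1:ℂ)^((x ⬝ᵥ a).val) * (-1:ℂ)^((x ⬝ᵥ b).val)) := by
    intro x
    have h1 : ((iqpProb P θ x : ℝ) : ℂ) =
        (c * ∑ a, (-1:ℂ)^((x ⬝ᵥ a).val) * f a) *
          (starRingEnd ℂ) (c * ∑ a, (-1:ℂ)^((x ⬝ᵥ a).val) * f a) := by
      rw [iqpProb, Complex.sq_norm, ← Complex.mul_conj]
    have hcc : (starRingEnd ℂ) c = c := by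
      rw [hc, map_zpow₀]
      norm_num [Complex.conj_ofNat]
    have hterm : ∀ b, (starRingEnd ℂ) ((-1:ℂ)^((x ⬝ᵥ b).val) * f b)
        = (-1:ℂ)^((x ⬝ᵥ b).val) * (starRingEnd ℂ) (f b) := by
      intro b
      rw [_root_.map_mul]
      congr 1
      simp only [map_pow, map_neg, _root_.map_one]
    rw [h1, _root_.map_mul, map_sum, hcc]
    simp_rw [hterm]
    rw [mul_mul_mul_comm, Finset.sum_mul_sum]
    rw [Finset.mul_sum]
    refine Finset.sum_congr rfl fun a _ => ?_
    rw [Finset.mul_sum]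
    refine Finset.sum_congr rfl fun b _ => ?_
    ring
  have hcc2 : c * c * (2:ℂ)^l = c := by
    rw [hc, ← zpow_natCast (2:ℂ) l, ← zpow_add₀ (two_ne_zero) (-(l:ℤ)) (-(l:ℤ)),
      ← zpow_add₀ (two_ne_zero)]
    norm_num
  have hzval : ∀ a : ZMod 2, a ≠ 1 → a = 0 := by decide
  have hprod : ∀ a : Fin l → ZMod 2, f a * (starRingEnd ℂ) (f (a + s)) =
      Complex.exp (2 * Complex.I * θ *
        ∑ j ∈ Finset.univ.filter (fun j : Fin n => (P j) ⬝ᵥ s = 1),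
          (-1 : ℂ) ^ ((P j) ⬝ᵥ a).val) := by
    intro a
    rw [hconj_f, hf, ← Complex.exp_add]
    congr 1
    have hS : (∑ j, (-1:ℂ)^((P j) ⬝ᵥ a).val) - (∑ j, (-1:ℂ)^((P j) ⬝ᵥ (a + s)).val) =
        2 * ∑ j ∈ Finset.univ.filter (fun j : Fin n => (P j) ⬝ᵥ s = 1),
          (-1 : ℂ) ^ ((P j) ⬝ᵥ a).val := by
      rw [← Finset.sum_sub_distrib, Finset.mul_sum, Finset.sum_filter]
      refine Finset.sum_congr rfl fun j _ => ?_
      rw [dotProduct_add, chi_add]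
      by_cases hj : (P j) ⬝ᵥ s = 1
      · rw [if_pos hj, hj]
        norm_num [show ZMod.val (1:ZMod 2) = 1 from rfl]
        ring
      · rw [if_neg hj, hzval _ hj]
        norm_num [show ZMod.val (0:ZMod 2) = 0 from rfl]
    linear_combination (Complex.I * (θ:ℂ)) * hS
  have hcond : ∀ a b : Fin l → ZMod 2, (a + b + s = 0) ↔ b = a + s := by
    intro a b
    have hself : (a + s) + (a + s) = 0 := funext fun k => by simpa using CharTwo.add_self_eq_zero ((a + s) k)
    rw [show a + b + s = (a + s) + b by ring, add_eq_zero_iff_neg_eq,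
      neg_eq_of_add_eq_zero_left hself, eq_comm]
  calc ((∑ x : Fin l → ZMod 2, (-1 : ℝ) ^ (x ⬝ᵥ s).val * iqpProb P θ x : ℝ) : ℂ)
      = ∑ x : Fin l → ZMod 2, (-1:ℂ)^((x ⬝ᵥ s).val) * ((iqpProb P θ x : ℝ) : ℂ) := by
        push_cast; rfl
    _ = ∑ x : Fin l → ZMod 2, ∑ a : Fin l → ZMod 2, ∑ b : Fin l → ZMod 2,
          (c * c * (f a * (starRingEnd ℂ) (f b))) * (-1:ℂ)^((x ⬝ᵥ (a + b + s)).val) := by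
        refine Finset.sum_congr rfl fun x _ => ?_
        rw [key x, Finset.mul_sum]
        refine Finset.sum_congr rfl fun a _ => ?_
        rw [Finset.mul_sum]
        refine Finset.sum_congr rfl fun b _ => ?_
        rw [dotProduct_add, dotProduct_add, chi_add, chi_add]
        ring
    _ = ∑ a : Fin l → ZMod 2, ∑ b : Fin l → ZMod 2,
          (c * c * (f a * (starRingEnd ℂ) (f b))) * ∑ x : Fin l → ZMod 2,
            (-1:ℂ)^((x ⬝ᵥ (a + b + s)).val) := by
        rw [Finset.sum_comm]
        refine Finset.sum_congr rfl fun a _ => ?_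
        rw [Finset.sum_comm]
        refine Finset.sum_congr rfl fun b _ => ?_
        rw [Finset.mul_sum]
    _ = ∑ a : Fin l → ZMod 2, (c * c * (f a * (starRingEnd ℂ) (f (a + s)))) * (2:ℂ)^l := by
        refine Finset.sum_congr rfl fun a _ => ?_
        have : ∀ b : Fin l → ZMod 2,
            (c * c * (f a * (starRingEnd ℂ) (f b))) * ∑ x : Fin l → ZMod 2,
              (-1:ℂ)^((x ⬝ᵥ (a + b + s)).val)
            = if b = a + s then (c * c * (f a * (starRingEnd ℂ) (f b))) * (2:ℂ)^l else 0 := by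
          intro b
          rw [chi_orth, mul_ite, mul_zero, if_congr (hcond a b) rfl rfl]
        simp_rw [this]
        rw [Finset.sum_ite_eq' Finset.univ (a + s)
          (fun b => (c * c * (f a * (starRingEnd ℂ) (f b))) * (2:ℂ)^l)]
        simp
    _ = (2 : ℂ) ^ (-(l : ℤ)) * ∑ a : Fin l → ZMod 2,
          Complex.exp (2 * Complex.I * θ *
            ∑ j ∈ Finset.univ.filter (fun j : Fin n => (P j) ⬝ᵥ s = 1),
              (-1 : ℂ) ^ ((P j) ⬝ᵥ a).val) := by
        rw [Finset.mul_sum]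
        refine Finset.sum_congr rfl fun a _ => ?_
        rw [hprod a, ← hc]
        linear_combination (Complex.exp (2 * Complex.I * θ *
          ∑ j ∈ Finset.univ.filter (fun j : Fin n => (P j) ⬝ᵥ s = 1),
            (-1 : ℂ) ^ ((P j) ⬝ᵥ a).val)) * hcc2

end
end

section
/- Let P be an n×l binary matrix and take θ = π/4. Then there exist an F₂-linear subspace W ≤ F₂ˡ and a vector v ∈ F₂ˡ such that for every x ∈ F₂ˡ: ℙ[X=x] = 2^{−dim W} if x ∈ v + W, and ℙ[X=x] = 0 otherwise. (The IQP distribution at θ = π/4 is uniform on an affine subspace of F₂ˡ.) -/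
open Matrix BigOperators Finset

noncomputable section

namespace IQP

lemma zcases (u : ZMod 2) : u = 0 ∨ u = 1 := by revert u; decide

def sg (u : ZMod 2) : ℂ := (-1 : ℂ) ^ u.val
def ti (u : ZMod 2) : ℂ := (-Complex.I) ^ u.val

@[simp] lemma sg_zero : sg 0 = 1 := by simp [sg]
@[simp] lemma sg_one : sg 1 = -1 := by simp [sg, ZMod.val_one]
@[simp] lemma ti_zero : ti 0 = 1 := by simp [ti]
@[simp] lemma ti_one : ti 1 = -Complex.I := by simp [ti, ZMod.val_one]

lemma sg_add (u v : ZMod 2) : sg (u + v) = sg u * sg v := by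
  rcases zcases u with h | h <;> rcases zcases v with h' | h' <;> subst h <;> subst h' <;>
    first
      | (rw [show (1 + 1 : ZMod 2) = 0 from by decide]; norm_num)
      | norm_num

lemma sg_mul_self (u : ZMod 2) : sg u * sg u = 1 := by
  rcases zcases u with h | h <;> subst h <;> norm_num

lemma sg_eq_one_iff (u : ZMod 2) : sg u = 1 ↔ u = 0 := by
  rcases zcases u with h | h <;> subst h <;> norm_num

lemma ti_add (u v : ZMod 2) : ti (u + v) = ti u * ti v * sg (u * v) := by
  rcases zcases u with h | h <;> rcases zcases v with h' | h' <;> subst h <;> subst h' <;>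
    first
      | (rw [show (1 + 1 : ZMod 2) = 0 from by decide]; norm_num [Complex.I_mul_I])
      | norm_num [Complex.I_mul_I]

lemma conj_ti (u : ZMod 2) : (starRingEnd ℂ) (ti u) = Complex.I ^ u.val := by
  simp [ti, map_pow]

lemma ti_mul_conj (u : ZMod 2) : ti u * (starRingEnd ℂ) (ti u) = 1 := by
  rcases zcases u with h | h <;> subst h <;> simp [Complex.mul_conj', Complex.I_mul_I] <;>
    norm_num [ZMod.val_one, Complex.conj_I, Complex.I_mul_I]

end IQP

namespace Part2
open IQP

lemma sg_prod {ι : Type*} (s : Finset ι) (f : ι → ZMod 2) :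
    ∏ j ∈ s, sg (f j) = sg (∑ j ∈ s, f j) := by
  induction s using Finset.cons_induction with
  | empty => simp
  | cons j s hj ih => rw [Finset.prod_cons, Finset.sum_cons, sg_add, ih]

lemma zmod2_neg (u : ZMod 2) : -u = u := by revert u; decide
lemma zmod2_add_self (u : ZMod 2) : u + u = 0 := by revert u; decide

variable {l : ℕ}

/-- Orthogonality of characters. -/
lemma sum_sg (c : Fin l → ZMod 2) :
    ∑ a : Fin l → ZMod 2, sg (c ⬝ᵥ a) = if c = 0 then (2:ℂ)^l else 0 := by
  by_cases hc : c = 0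
  · simp [hc, Finset.card_univ]
  · simp only [hc, if_false]
    obtain ⟨i, hi⟩ : ∃ i, c i ≠ 0 := by
      by_contra h; push_neg at h; exact hc (funext fun i => h i)
    have hci : c i = 1 := (zcases (c i)).resolve_left hi
    set d : Fin l → ZMod 2 := Pi.single i 1 with hd
    have key : ∀ a, sg (c ⬝ᵥ (a + d)) = - sg (c ⬝ᵥ a) := by
      intro a
      have : c ⬝ᵥ (a + d) = c ⬝ᵥ a + 1 := by
        rw [dotProduct_add]
        congr 1
        simp [hd, dotProduct_single, hci]
      rw [this, sg_add, sg_one]; ring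
    have h2 : ∑ a : Fin l → ZMod 2, sg (c ⬝ᵥ a)
        = ∑ a : Fin l → ZMod 2, sg (c ⬝ᵥ (a + d)) :=
      (Fintype.sum_equiv (Equiv.addRight d) _ _ (fun a => rfl)).symm
    have h3 : ∑ a : Fin l → ZMod 2, sg (c ⬝ᵥ a)
        = - ∑ a : Fin l → ZMod 2, sg (c ⬝ᵥ a) := by
      conv_lhs => rw [h2]
      rw [Finset.sum_congr rfl (fun a _ => key a), Finset.sum_neg_distrib]
    have h4 : (∑ a : Fin l → ZMod 2, sg (c ⬝ᵥ a)) + ∑ a : Fin l → ZMod 2, sg (c ⬝ᵥ a) = 0 := by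
      nth_rewrite 1 [h3]; ring
    rw [← two_mul] at h4
    exact (mul_eq_zero.mp h4).resolve_left two_ne_zero

end Part2

namespace Part3
open IQP Part2

variable {n l : ℕ} (P : Matrix (Fin n) (Fin l) (ZMod 2))

def g (a : Fin l → ZMod 2) : ℂ := ∏ j, ti (P j ⬝ᵥ a)

def ghat (x : Fin l → ZMod 2) : ℂ := ∑ a, sg (x ⬝ᵥ a) * g P a

def Kfin : Finset (Fin l → ZMod 2) :=
  Finset.univ.filter (fun b => (Pᵀ * P).mulVec b = 0)

lemma mem_Kfin {b : Fin l → ZMod 2} : b ∈ Kfin P ↔ (Pᵀ * P).mulVec b = 0 := by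
  simp [Kfin]

@[simp] lemma g_zero : g P 0 = 1 := by simp [g]

lemma g_mul_conj (a : Fin l → ZMod 2) : g P a * (starRingEnd ℂ) (g P a) = 1 := by
  rw [g, map_prod, ← Finset.prod_mul_distrib]
  exact Finset.prod_eq_one fun j _ => ti_mul_conj _

lemma conj_sg (u : ZMod 2) : (starRingEnd ℂ) (sg u) = sg u := by
  simp [sg, map_pow]

lemma bilin (a b : Fin l → ZMod 2) :
    P.mulVec a ⬝ᵥ P.mulVec b = a ⬝ᵥ (Pᵀ * P).mulVec b := by
  have h : a ⬝ᵥ (Pᵀ * P).mulVec b = P.mulVec a ⬝ᵥ P.mulVec b := by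
    rw [← Matrix.mulVec_mulVec, Matrix.dotProduct_mulVec (v := a), Matrix.vecMul_transpose]
  exact h.symm

lemma g_add (a b : Fin l → ZMod 2) :
    g P (a + b) = g P a * g P b * sg (a ⬝ᵥ (Pᵀ * P).mulVec b) := by
  have h1 : ∀ j, ti (P j ⬝ᵥ (a + b))
      = ti (P j ⬝ᵥ a) * ti (P j ⬝ᵥ b) * sg ((P j ⬝ᵥ a) * (P j ⬝ᵥ b)) := by
    intro j; rw [dotProduct_add, ti_add]
  rw [g, Finset.prod_congr rfl (fun j _ => h1 j), Finset.prod_mul_distrib,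
    Finset.prod_mul_distrib, sg_prod, ← bilin]
  rfl

lemma ghat_mul_conj (x : Fin l → ZMod 2) :
    ghat P x * (starRingEnd ℂ) (ghat P x)
      = (2:ℂ)^l * ∑ b ∈ Kfin P, sg (x ⬝ᵥ b) * g P b := by
  have hconj : (starRingEnd ℂ) (ghat P x)
      = ∑ a', sg (x ⬝ᵥ a') * (starRingEnd ℂ) (g P a') := by
    rw [ghat, map_sum]
    exact Finset.sum_congr rfl (fun a _ => by rw [_root_.map_mul, conj_sg])
  have hterm : ∀ a' b : Fin l → ZMod 2,
      (sg (x ⬝ᵥ (a' + b)) * g P (a' + b)) * (sg (x ⬝ᵥ a') * (starRingEnd ℂ) (g P a'))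
        = sg (x ⬝ᵥ b) * g P b * sg (a' ⬝ᵥ (Pᵀ * P).mulVec b) := by
    intro a' b
    calc (sg (x ⬝ᵥ (a' + b)) * g P (a' + b)) * (sg (x ⬝ᵥ a') * (starRingEnd ℂ) (g P a'))
        = (sg (x ⬝ᵥ a') * sg (x ⬝ᵥ a')) * (g P a' * (starRingEnd ℂ) (g P a'))
            * (sg (x ⬝ᵥ b) * g P b * sg (a' ⬝ᵥ (Pᵀ * P).mulVec b)) := by
          rw [dotProduct_add, sg_add, g_add]; ring
      _ = _ := by rw [sg_mul_self, g_mul_conj]; ring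
  calc ghat P x * (starRingEnd ℂ) (ghat P x)
      = ∑ a, ∑ a', (sg (x ⬝ᵥ a) * g P a) * (sg (x ⬝ᵥ a') * (starRingEnd ℂ) (g P a')) := by
        rw [hconj, ghat, Finset.sum_mul_sum]
    _ = ∑ a', ∑ a, (sg (x ⬝ᵥ a) * g P a) * (sg (x ⬝ᵥ a') * (starRingEnd ℂ) (g P a')) :=
        Finset.sum_comm
    _ = ∑ a', ∑ b, (sg (x ⬝ᵥ (a' + b)) * g P (a' + b))
          * (sg (x ⬝ᵥ a') * (starRingEnd ℂ) (g P a')) := by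
        refine Finset.sum_congr rfl fun a' _ => ?_
        exact (Fintype.sum_equiv (Equiv.addLeft a')
          (fun b => (sg (x ⬝ᵥ (a' + b)) * g P (a' + b))
            * (sg (x ⬝ᵥ a') * (starRingEnd ℂ) (g P a')))
          (fun a => (sg (x ⬝ᵥ a) * g P a) * (sg (x ⬝ᵥ a') * (starRingEnd ℂ) (g P a')))
          (fun b => rfl)).symm
    _ = ∑ a', ∑ b, sg (x ⬝ᵥ b) * g P b * sg (a' ⬝ᵥ (Pᵀ * P).mulVec b) :=
        Finset.sum_congr rfl fun a' _ => Finset.sum_congr rfl fun b _ => hterm a' b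
    _ = ∑ b, ∑ a', sg (x ⬝ᵥ b) * g P b * sg (a' ⬝ᵥ (Pᵀ * P).mulVec b) := Finset.sum_comm
    _ = ∑ b, sg (x ⬝ᵥ b) * g P b * ∑ a', sg ((Pᵀ * P).mulVec b ⬝ᵥ a') := by
        refine Finset.sum_congr rfl fun b _ => ?_
        rw [Finset.mul_sum]
        exact Finset.sum_congr rfl fun a' _ => by rw [dotProduct_comm a' ((Pᵀ * P).mulVec b)]
    _ = ∑ b, sg (x ⬝ᵥ b) * g P b * (if (Pᵀ * P).mulVec b = 0 then (2:ℂ)^l else 0) := by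
        refine Finset.sum_congr rfl fun b _ => ?_
        rw [sum_sg]
    _ = ∑ b ∈ Kfin P, sg (x ⬝ᵥ b) * g P b * (2:ℂ)^l := by
        rw [Kfin, Finset.sum_filter]
        refine Finset.sum_congr rfl fun b _ => ?_
        by_cases h : (Pᵀ * P).mulVec b = 0 <;> simp [h]
    _ = (2:ℂ)^l * ∑ b ∈ Kfin P, sg (x ⬝ᵥ b) * g P b := by
        rw [Finset.mul_sum]; exact Finset.sum_congr rfl fun b _ => by ring

end Part3

namespace Part4
open IQP Part2 Part3

variable {n l : ℕ} (P : Matrix (Fin n) (Fin l) (ZMod 2))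

/-- Support condition. -/
def H (x : Fin l → ZMod 2) : Prop := ∀ b ∈ Kfin P, sg (x ⬝ᵥ b) * g P b = 1

lemma zero_mem_Kfin : (0 : Fin l → ZMod 2) ∈ Kfin P := by
  rw [mem_Kfin]; simp

lemma Kfin_add {b b' : Fin l → ZMod 2} (hb : b ∈ Kfin P) (hb' : b' ∈ Kfin P) :
    b + b' ∈ Kfin P := by
  rw [mem_Kfin] at *
  rw [Matrix.mulVec_add, hb, hb', add_zero]

lemma g_sq_of_mem {b : Fin l → ZMod 2} (hb : b ∈ Kfin P) : g P b * g P b = 1 := by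
  have hbb : b + b = 0 := funext fun i => zmod2_add_self (b i)
  have h := g_add P b b
  rw [hbb, g_zero, (mem_Kfin P).mp hb, dotProduct_zero, sg_zero, mul_one] at h
  exact h.symm

lemma chi_add {x b b' : Fin l → ZMod 2} (hb' : b' ∈ Kfin P) :
    sg (x ⬝ᵥ (b + b')) * g P (b + b')
      = (sg (x ⬝ᵥ b) * g P b) * (sg (x ⬝ᵥ b') * g P b') := by
  rw [dotProduct_add, sg_add, g_add, (mem_Kfin P).mp hb',
    dotProduct_zero, sg_zero]
  ring

lemma chi_sq {x b : Fin l → ZMod 2} (hb : b ∈ Kfin P) :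
    (sg (x ⬝ᵥ b) * g P b) * (sg (x ⬝ᵥ b) * g P b) = 1 := by
  calc (sg (x ⬝ᵥ b) * g P b) * (sg (x ⬝ᵥ b) * g P b)
      = (sg (x ⬝ᵥ b) * sg (x ⬝ᵥ b)) * (g P b * g P b) := by ring
    _ = 1 := by rw [sg_mul_self, g_sq_of_mem P hb, mul_one]

lemma charSum_of_H {x : Fin l → ZMod 2} (h : H P x) :
    ∑ b ∈ Kfin P, sg (x ⬝ᵥ b) * g P b = ((Kfin P).card : ℂ) := by
  rw [Finset.sum_congr rfl (fun b hb => h b hb)]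
  simp

lemma charSum_of_not_H {x : Fin l → ZMod 2} (h : ¬ H P x) :
    ∑ b ∈ Kfin P, sg (x ⬝ᵥ b) * g P b = 0 := by
  unfold H at h; push_neg at h
  obtain ⟨b₀, hb₀, hne⟩ := h
  have hval : sg (x ⬝ᵥ b₀) * g P b₀ = -1 :=
    ((mul_self_eq_one_iff.mp (chi_sq P hb₀)).resolve_left hne)
  set S := ∑ b ∈ Kfin P, sg (x ⬝ᵥ b) * g P b with hS
  have h1 : ∑ b ∈ Kfin P, sg (x ⬝ᵥ (b + b₀)) * g P (b + b₀) = S := by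
    refine Finset.sum_equiv (Equiv.addRight b₀) (fun b => ?_) (fun b _ => rfl)
    constructor
    · intro hb; exact Kfin_add P hb hb₀
    · intro hb
      have h := Kfin_add P hb hb₀
      have hz0 : b₀ + b₀ = 0 := funext fun i => zmod2_add_self (b₀ i)
      simpa [add_assoc, hz0] using h
  have h2 : ∑ b ∈ Kfin P, sg (x ⬝ᵥ (b + b₀)) * g P (b + b₀) = S * (-1) := by
    rw [Finset.sum_congr rfl (fun b _ => chi_add P hb₀ (x := x) (b := b)), ← Finset.sum_mul,
      hval]
  have h3 : S = S * (-1) := h1.symm.trans h2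
  have h4 : S + S = 0 := by nth_rewrite 1 [h3]; ring
  rw [← two_mul] at h4
  exact (mul_eq_zero.mp h4).resolve_left two_ne_zero

lemma exists_v : ∃ v, H P v := by
  by_contra hcon
  push_neg at hcon
  have hz : ∀ x : Fin l → ZMod 2, ghat P x * (starRingEnd ℂ) (ghat P x) = 0 := fun x => by
    rw [ghat_mul_conj, charSum_of_not_H P (hcon x), mul_zero]
  have hsum : ∑ x : Fin l → ZMod 2, ghat P x * (starRingEnd ℂ) (ghat P x) = 0 :=
    Finset.sum_eq_zero fun x _ => hz x
  have hsum2 : ∑ x : Fin l → ZMod 2, ghat P x * (starRingEnd ℂ) (ghat P x)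
      = (2:ℂ)^l * (2:ℂ)^l := by
    calc ∑ x : Fin l → ZMod 2, ghat P x * (starRingEnd ℂ) (ghat P x)
        = ∑ x : Fin l → ZMod 2, (2:ℂ)^l * ∑ b ∈ Kfin P, sg (x ⬝ᵥ b) * g P b :=
          Finset.sum_congr rfl fun x _ => ghat_mul_conj P x
      _ = (2:ℂ)^l * ∑ x : Fin l → ZMod 2, ∑ b ∈ Kfin P, sg (x ⬝ᵥ b) * g P b := by
          rw [Finset.mul_sum]
      _ = (2:ℂ)^l * ∑ b ∈ Kfin P, ∑ x : Fin l → ZMod 2, sg (x ⬝ᵥ b) * g P b := by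
          rw [Finset.sum_comm]
      _ = (2:ℂ)^l * ∑ b ∈ Kfin P, (∑ x : Fin l → ZMod 2, sg (b ⬝ᵥ x)) * g P b := by
          congr 1
          refine Finset.sum_congr rfl fun b _ => ?_
          rw [Finset.sum_mul]
          exact Finset.sum_congr rfl fun x _ => by rw [dotProduct_comm]
      _ = (2:ℂ)^l * ∑ b ∈ Kfin P, (if b = 0 then (2:ℂ)^l else 0) * g P b := by
          congr 1
          exact Finset.sum_congr rfl fun b _ => by rw [sum_sg]
      _ = (2:ℂ)^l * (2:ℂ)^l := by
          congr 1
          have hsplit : ∀ b ∈ Kfin P,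
              (if b = 0 then (2:ℂ)^l else 0) * g P b
                = if b = 0 then (2:ℂ)^l * g P b else 0 := fun b _ => by
            split_ifs <;> simp
          rw [Finset.sum_congr rfl hsplit,
            Finset.sum_ite_eq' (Kfin P) 0 (fun b => (2:ℂ)^l * g P b),
            if_pos (zero_mem_Kfin P), g_zero, mul_one]
  rw [hsum] at hsum2
  have : (2:ℂ)^l * (2:ℂ)^l ≠ 0 :=
    mul_ne_zero (pow_ne_zero _ two_ne_zero) (pow_ne_zero _ two_ne_zero)
  exact this hsum2.symm

end Part4

namespace Part5
open IQP Part2 Part3 Part4 Module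

variable {n l : ℕ} (P : Matrix (Fin n) (Fin l) (ZMod 2))

def Ksub : Submodule (ZMod 2) (Fin l → ZMod 2) := LinearMap.ker (Pᵀ * P).mulVecLin

lemma mem_Ksub {b : Fin l → ZMod 2} : b ∈ Ksub P ↔ b ∈ Kfin P := by
  rw [mem_Kfin, Ksub, LinearMap.mem_ker, Matrix.mulVecLin_apply]

def dualIso : (Fin l → ZMod 2) ≃ₗ[ZMod 2] Module.Dual (ZMod 2) (Fin l → ZMod 2) :=
  (Pi.basisFun (ZMod 2) (Fin l)).toDualEquiv

lemma dualIso_apply (x y : Fin l → ZMod 2) : dualIso (l := l) x y = x ⬝ᵥ y := by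
  rw [dualIso, Basis.toDualEquiv_apply]
  have hx : ∑ i, x i • (Pi.basisFun (ZMod 2) (Fin l)) i = x := by
    simpa [Pi.basisFun_repr] using (Pi.basisFun (ZMod 2) (Fin l)).sum_repr x
  conv_lhs => rw [← hx]
  rw [map_sum, LinearMap.coe_sum, Finset.sum_apply]
  simp only [_root_.map_smul, LinearMap.smul_apply, Basis.toDual_apply_right, Pi.basisFun_repr,
    smul_eq_mul]
  rfl

def Wsub : Submodule (ZMod 2) (Fin l → ZMod 2) :=
  (Ksub P).dualAnnihilator.comap (dualIso (l := l)).toLinearMap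

lemma mem_Wsub {x : Fin l → ZMod 2} : x ∈ Wsub P ↔ ∀ b ∈ Kfin P, x ⬝ᵥ b = 0 := by
  rw [Wsub, Submodule.mem_comap, Submodule.mem_dualAnnihilator]
  constructor
  · intro h b hb
    have := h b ((mem_Ksub P).mpr hb)
    simp only [LinearEquiv.coe_coe] at this
    rwa [dualIso_apply] at this
  · intro h w hw
    have := h w ((mem_Ksub P).mp hw)
    simp only [LinearEquiv.coe_coe]
    rw [dualIso_apply]
    exact this

lemma finrank_add : finrank (ZMod 2) (Wsub P) + finrank (ZMod 2) (Ksub P) = l := by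
  have h0 : finrank (ZMod 2) (Wsub P) = finrank (ZMod 2) (Ksub P).dualAnnihilator :=
    LinearEquiv.finrank_eq (LinearEquiv.ofSubmodule' (dualIso (l := l)) _)
  have h1 : finrank (ZMod 2) ((Fin l → ZMod 2) ⧸ (Ksub P))
      = finrank (ZMod 2) (Ksub P).dualAnnihilator :=
    LinearEquiv.finrank_eq (Subspace.quotEquivAnnihilator (Ksub P))
  have h2 := Submodule.finrank_quotient_add_finrank (Ksub P)
  have h3 : finrank (ZMod 2) (Fin l → ZMod 2) = l := by
    simp [Module.finrank_pi]
  omega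

lemma card_Kfin : ((Kfin P).card : ℝ) = 2 ^ finrank (ZMod 2) (Ksub P) := by
  have e : {b // b ∈ Kfin P} ≃ (Ksub P) :=
    Equiv.subtypeEquivRight fun b => ((mem_Ksub P).symm)
  letI : Fintype (Ksub P) := Fintype.ofFinite _
  have h1 : (Kfin P).card = Fintype.card (Ksub P) := by
    rw [← Fintype.card_coe (Kfin P)]
    exact Fintype.card_congr e
  have h2 : Fintype.card (Ksub P) = 2 ^ finrank (ZMod 2) (Ksub P) := by
    have := card_eq_pow_finrank (K := ZMod 2) (V := Ksub P)
    rwa [ZMod.card] at this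
  rw [h1, h2]
  push_cast
  ring

end Part5

namespace Part6
open IQP Part2 Part3 Part4 Part5 Module

variable {n l : ℕ} (P : Matrix (Fin n) (Fin l) (ZMod 2))

lemma neg_one_pow_eq_sg (u : ZMod 2) : (-1:ℂ) ^ u.val = sg u := rfl

lemma exp_neg_pi_div_two : Complex.exp (-(↑Real.pi/2) * Complex.I) = -Complex.I := by
  have h : (-(↑Real.pi/2) : ℂ) = ((-(Real.pi/2) : ℝ) : ℂ) := by push_cast; ring
  rw [h, Complex.exp_mul_I, ← Complex.ofReal_cos, ← Complex.ofReal_sin]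
  rw [Real.cos_neg, Real.sin_neg, Real.cos_pi_div_two, Real.sin_pi_div_two]
  push_cast
  ring

lemma exp_fact (u : ZMod 2) :
    Complex.exp (Complex.I * ((Real.pi/4 : ℝ) : ℂ) * sg u)
      = Complex.exp (Complex.I * ((Real.pi/4 : ℝ) : ℂ)) * ti u := by
  rcases IQP.zcases u with h | h <;> subst h
  · simp
  · rw [sg_one, ti_one]
    rw [show Complex.I * ((Real.pi/4 : ℝ) : ℂ) * (-1)
        = Complex.I * ((Real.pi/4 : ℝ) : ℂ) + (-(↑Real.pi/2) * Complex.I) from by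
      push_cast; ring]
    rw [Complex.exp_add, exp_neg_pi_div_two]

lemma iqp_formula (x : Fin l → ZMod 2) :
    iqpProb P (Real.pi/4) x = ((2:ℝ)^(-(l:ℤ)))^2 * Complex.normSq (ghat P x) := by
  rw [iqpProb]
  simp only [neg_one_pow_eq_sg]
  have hexp : ∀ a : Fin l → ZMod 2,
      Complex.exp (Complex.I * ((Real.pi/4 : ℝ) : ℂ) * ∑ j, sg (P j ⬝ᵥ a))
        = Complex.exp (Complex.I * ((Real.pi/4 : ℝ) : ℂ)) ^ n * g P a := by
    intro a
    rw [Finset.mul_sum, Complex.exp_sum,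
      Finset.prod_congr rfl (fun j _ => exp_fact (P j ⬝ᵥ a)),
      Finset.prod_mul_distrib, g]
    simp
  have hsum : ∑ a : Fin l → ZMod 2,
      sg (x ⬝ᵥ a) * Complex.exp (Complex.I * ((Real.pi/4 : ℝ) : ℂ) * ∑ j, sg (P j ⬝ᵥ a))
        = Complex.exp (Complex.I * ((Real.pi/4 : ℝ) : ℂ)) ^ n * ghat P x := by
    rw [ghat, Finset.mul_sum]
    refine Finset.sum_congr rfl fun a _ => ?_
    rw [hexp a]; ring
  have hcast : ((Real.pi/4 : ℝ) : ℂ) = ((Real.pi : ℂ)/4) := by push_cast; ring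
  rw [← hcast] at *
  rw [hsum]
  rw [norm_mul, norm_mul, norm_pow, Complex.norm_exp]
  have hre : (Complex.I * ((Real.pi/4 : ℝ) : ℂ)).re = 0 := by simp
  rw [hre, Real.exp_zero, one_pow, one_mul]
  have habs2 : ‖(2:ℂ)^(-(l:ℤ))‖ = (2:ℝ)^(-(l:ℤ)) := by
    rw [norm_zpow, Complex.norm_two]
  rw [habs2, mul_pow, Complex.sq_norm]

lemma normSq_ghat_of_H {x : Fin l → ZMod 2} (h : H P x) :
    Complex.normSq (ghat P x) = (2:ℝ)^l * ((Kfin P).card : ℝ) := by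
  have hc : (Complex.normSq (ghat P x) : ℂ) = (2:ℂ)^l * ((Kfin P).card : ℂ) := by
    rw [← Complex.mul_conj, ghat_mul_conj, charSum_of_H P h]
  exact_mod_cast hc

lemma normSq_ghat_of_not_H {x : Fin l → ZMod 2} (h : ¬ H P x) :
    Complex.normSq (ghat P x) = 0 := by
  have hc : (Complex.normSq (ghat P x) : ℂ) = 0 := by
    rw [← Complex.mul_conj, ghat_mul_conj, charSum_of_not_H P h, mul_zero]
  exact_mod_cast hc

lemma zmod2_sub_eq_add (u v : ZMod 2) : u - v = u + v := by revert u v; decide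

end Part6

/-- at `θ = π/4` the IQP distribution is uniform on an affine
subspace `v + W` of `F₂ˡ`. -/
theorem iqp_uniform_on_affine_subspace {n l : ℕ} (P : Matrix (Fin n) (Fin l) (ZMod 2)) :
    ∃ (W : Submodule (ZMod 2) (Fin l → ZMod 2)) (v : Fin l → ZMod 2),
      ∀ x : Fin l → ZMod 2,
        (x - v ∈ W → iqpProb P (Real.pi / 4) x =
          (2 : ℝ) ^ (-(Module.finrank (ZMod 2) W : ℤ))) ∧
        (x - v ∉ W → iqpProb P (Real.pi / 4) x = 0) := by
  classical
  obtain ⟨v, hv⟩ := Part4.exists_v P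
  refine ⟨Part5.Wsub P, v, fun x => ⟨?_, ?_⟩⟩
  · intro hxW
    have hHx : Part4.H P x := by
      intro b hb
      have h1 := (Part5.mem_Wsub P).mp hxW b hb
      rw [sub_dotProduct, sub_eq_zero] at h1
      rw [h1]
      exact hv b hb
    rw [Part6.iqp_formula, Part6.normSq_ghat_of_H P hHx, Part5.card_Kfin]
    have hfr := Part5.finrank_add P
    have h2 : (2:ℝ) ≠ 0 := two_ne_zero
    rw [← zpow_natCast (2:ℝ) l, ← zpow_natCast (2:ℝ) (Module.finrank (ZMod 2) (Part5.Ksub P)),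
      ← zpow_add₀ h2, ← zpow_natCast ((2:ℝ)^(-(l:ℤ))) 2, ← _root_.zpow_mul, ← zpow_add₀ h2]
    congr 1
    omega
  · intro hxW
    have hHx : ¬ Part4.H P x := by
      intro hH
      apply hxW
      rw [Part5.mem_Wsub]
      intro b hb
      have h1 := hH b hb
      have h2 := hv b hb
      have h3 : (IQP.sg (x ⬝ᵥ b) * IQP.sg (v ⬝ᵥ b)) * (Part3.g P b * Part3.g P b) = 1 := by
        calc (IQP.sg (x ⬝ᵥ b) * IQP.sg (v ⬝ᵥ b)) * (Part3.g P b * Part3.g P b)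
            = (IQP.sg (x ⬝ᵥ b) * Part3.g P b) * (IQP.sg (v ⬝ᵥ b) * Part3.g P b) := by ring
          _ = 1 := by rw [h1, h2, mul_one]
      rw [Part4.g_sq_of_mem P hb, mul_one, ← IQP.sg_add, IQP.sg_eq_one_iff] at h3
      rw [sub_dotProduct, Part6.zmod2_sub_eq_add]
      exact h3
    rw [Part6.iqp_formula, Part6.normSq_ghat_of_not_H P hHx, mul_zero]

end
end

section
/- Let P be an n×l binary matrix, set V := { s ∈ F₂ˡ : Pᵀ·P·s = 0 } and U := { s ∈ V : 4 divides the Hamming weight of P·s }. Then at θ = π/4, for every x ∈ F₂ˡ: ℙ[X=x] = 2^{−l} · ( 2·|U| · [x·u = 0 for all u ∈ U] − |V| · [x·v = 0 for all v ∈ V] ), where |U|, |V| denote cardinalities and [·] is the indicator (1 if the condition holds, 0 otherwise). -/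
open Matrix BigOperators Finset

noncomputable section

section IQPAux

open Matrix BigOperators Finset Complex

variable {n l : ℕ}

private lemma zmod2_em (z : ZMod 2) : z = 0 ∨ z = 1 := by revert z; decide

private lemma neg_one_val_add (u v : ZMod 2) :
    ((-1 : ℂ)) ^ ((u + v).val) = (-1)^u.val * (-1)^v.val := by
  rcases zmod2_em u with rfl | rfl <;> rcases zmod2_em v with rfl | rfl <;> norm_num [show ZMod.val (2:ZMod 2) = 0 by decide,
    show ZMod.val (1:ZMod 2) = 1 by decide, show ZMod.val (0:ZMod 2) = 0 by decide,
    show (1 + 1 : ZMod 2) = 0 by decide]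

private lemma prod_neg_one_val {ι : Type*} (s : Finset ι) (g : ι → ZMod 2) :
    ∏ j ∈ s, (-1:ℂ)^(g j).val = (-1:ℂ)^((∑ j ∈ s, g j).val) := by
  classical
  induction s using Finset.cons_induction with
  | empty => simp
  | cons a s ha ih => rw [Finset.prod_cons, Finset.sum_cons, ih, neg_one_val_add]

private lemma sum_sign_eq_zero {S : Finset (Fin l → ZMod 2)} {x u : Fin l → ZMod 2}
    (hu : ∀ s ∈ S, s + u ∈ S) (hxu : x ⬝ᵥ u = 1) :
    ∑ s ∈ S, (-1:ℂ)^((x ⬝ᵥ s).val) = 0 := by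
  have hadd : ∀ z : ZMod 2, z + z = 0 := by decide
  have huu : ∀ s : Fin l → ZMod 2, s + u + u = s := by
    intro s; funext j; simp [add_assoc, hadd]
  have hune : u ≠ 0 := by
    intro h; rw [h] at hxu; simp [dotProduct_zero] at hxu
  refine Finset.sum_involution (fun s _ => s + u) ?_ ?_ (fun s hs => hu s hs) ?_
  · intro s hs
    rw [dotProduct_add, hxu, neg_one_val_add]
    have : ((1:ZMod 2)).val = 1 := rfl
    rw [this]; ring
  · intro s hs _
    intro h
    exact hune (by have := congrArg (· - s) h; simpa using this)
  · intro s hs; exact huu s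

private lemma sum_sign_subgroup {S : Finset (Fin l → ZMod 2)} (x : Fin l → ZMod 2)
    (hS : ∀ s ∈ S, ∀ t ∈ S, s + t ∈ S) :
    ∑ s ∈ S, (-1:ℂ)^((x ⬝ᵥ s).val) = if ∀ s ∈ S, x ⬝ᵥ s = 0 then (S.card : ℂ) else 0 := by
  split
  · next h =>
      have : ∀ s ∈ S, (-1:ℂ)^((x ⬝ᵥ s).val) = 1 := by
        intro s hs; rw [h s hs]; norm_num [show ZMod.val (0:ZMod 2) = 0 by decide]
      rw [Finset.sum_congr rfl this]
      simp
  · next h =>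
      push_neg at h
      obtain ⟨u, hu, hxu⟩ := h
      have hxu1 : x ⬝ᵥ u = 1 := (zmod2_em _).resolve_left hxu
      exact sum_sign_eq_zero (fun s hs => hS s hs u hu) hxu1

private lemma sum_sign_univ (w : Fin l → ZMod 2) :
    ∑ a : Fin l → ZMod 2, (-1:ℂ)^((w ⬝ᵥ a).val) = if w = 0 then (2:ℂ)^l else 0 := by
  rw [sum_sign_subgroup w (fun s _ t _ => Finset.mem_univ _)]
  by_cases hw : w = 0
  · rw [if_pos hw, if_pos]
    · simp [Finset.card_univ]
    · intro s _; rw [hw]; simp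
  · rw [if_neg hw, if_neg]
    intro h
    apply hw
    funext i
    have := h (Pi.single i 1) (Finset.mem_univ _)
    rwa [dotProduct_single, mul_one] at this

private lemma hammingNorm_eq_card (c : Fin n → ZMod 2) :
    hammingNorm c = (univ.filter fun i => c i = 1).card := by
  unfold hammingNorm
  congr 1
  apply Finset.filter_congr
  intro i _
  have : ∀ z : ZMod 2, z ≠ 0 ↔ z = 1 := by decide
  simp [this]

private lemma dot_eq_card (c d : Fin n → ZMod 2) :
    c ⬝ᵥ d = (((univ.filter fun i => c i = 1) ∩ (univ.filter fun i => d i = 1)).card : ZMod 2) := by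
  have h1 : ∀ u v : ZMod 2, u * v = if u = 1 ∧ v = 1 then 1 else 0 := by decide
  have h2 : (univ.filter fun i => c i = 1) ∩ (univ.filter fun i => d i = 1)
      = univ.filter fun i => c i = 1 ∧ d i = 1 := by
    ext j; simp [Finset.mem_filter, and_assoc]
  unfold dotProduct
  rw [h2]
  rw [Finset.sum_congr rfl (fun j _ => h1 (c j) (d j))]
  rw [Finset.sum_boole]

private lemma wt_add_aux (c d : Fin n → ZMod 2) :
    hammingNorm (c + d)
      + 2 * ((univ.filter fun i => c i = 1) ∩ (univ.filter fun i => d i = 1)).card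
      = hammingNorm c + hammingNorm d := by
  set A := univ.filter fun i => c i = 1 with hA
  set B := univ.filter fun i => d i = 1 with hB
  have hsupp : (univ.filter fun i => (c + d) i = 1) = (A ∪ B) \ (A ∩ B) := by
    ext j
    rcases zmod2_em (c j) with h1 | h1 <;> rcases zmod2_em (d j) with h2 | h2 <;>
      simp [hA, hB, Finset.mem_filter, Finset.mem_sdiff, Finset.mem_union, Finset.mem_inter,
        Pi.add_apply, h1, h2]
  have hsub : A ∩ B ⊆ A ∪ B := (Finset.inter_subset_left).trans Finset.subset_union_left
  rw [hammingNorm_eq_card, hammingNorm_eq_card, hammingNorm_eq_card, hsupp,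
    Finset.card_sdiff_of_subset hsub]
  simp only [← hA, ← hB]
  have h3 := Finset.card_union_add_card_inter A B
  have h4 := Finset.card_le_card hsub
  omega

private lemma wt_add_mod4 (c d : Fin n → ZMod 2) (h : c ⬝ᵥ d = 0) (hc : 4 ∣ hammingNorm c)
    (hd : 4 ∣ hammingNorm d) : 4 ∣ hammingNorm (c + d) := by
  rw [dot_eq_card, ZMod.natCast_eq_zero_iff] at h
  have := wt_add_aux c d
  omega

private lemma wt_even (c : Fin n → ZMod 2) (h : c ⬝ᵥ c = 0) : 2 ∣ hammingNorm c := by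
  rw [dot_eq_card, Finset.inter_self, ZMod.natCast_eq_zero_iff] at h
  rwa [hammingNorm_eq_card]

private lemma I_pow_even {k : ℕ} (h : 2 ∣ k) :
    Complex.I ^ k = if 4 ∣ k then 1 else -1 := by
  obtain ⟨m, rfl⟩ := h
  rw [pow_mul, Complex.I_sq]
  rcases Nat.even_or_odd m with ⟨k, rfl⟩ | ⟨k, rfl⟩
  · rw [Even.neg_one_pow ⟨k, rfl⟩, if_pos ⟨k, by ring⟩]
  · rw [Odd.neg_one_pow ⟨k, rfl⟩, if_neg (by rintro ⟨j, hj⟩; omega)]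

private lemma exp_I_pi2 : Complex.exp (Complex.I * ((Real.pi/2 : ℝ):ℂ)) = Complex.I := by
  rw [mul_comm, Complex.exp_mul_I, ← Complex.ofReal_cos, ← Complex.ofReal_sin]
  norm_num [Real.cos_pi_div_two, Real.sin_pi_div_two]

private lemma exp_neg_I_pi2 :
    Complex.exp (Complex.I * ((Real.pi/2 : ℝ):ℂ) * (-1)) = -Complex.I := by
  have h : Complex.I * ((Real.pi/2 : ℝ):ℂ) * (-1) = ((-(Real.pi/2) : ℝ):ℂ) * Complex.I := by
    push_cast; ring
  rw [h, Complex.exp_mul_I, ← Complex.ofReal_cos, ← Complex.ofReal_sin]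
  norm_num [Real.cos_pi_div_two, Real.sin_pi_div_two]

private lemma exp_step (v : ZMod 2) :
    Complex.exp (Complex.I * ((Real.pi/2 : ℝ):ℂ) * (-1:ℂ)^v.val)
      = Complex.I * (-1:ℂ)^v.val := by
  rcases zmod2_em v with h | h <;> rw [h]
  · simpa [show ZMod.val (0 : ZMod 2) = 0 from rfl] using exp_I_pi2
  · simpa [show ZMod.val (1 : ZMod 2) = 1 from rfl] using exp_neg_I_pi2

private lemma sub_pow_ite (u v : ZMod 2) :
    (-1:ℂ)^u.val - (-1)^((u + v).val) = if v = 1 then 2*(-1:ℂ)^u.val else 0 := by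
  rcases zmod2_em u with rfl | rfl <;> rcases zmod2_em v with rfl | rfl <;>
    norm_num [show ZMod.val (2:ZMod 2) = 0 by decide,
      show ZMod.val (1:ZMod 2) = 1 by decide, show ZMod.val (0:ZMod 2) = 0 by decide,
      show (1:ZMod 2) ≠ 0 by decide, show (1 + 1 : ZMod 2) = 0 by decide]

private lemma mul_eq_ite (u v : ZMod 2) : (if u = 1 then v else 0 : ZMod 2) = u * v := by
  fin_cases u <;> fin_cases v <;> decide

private lemma pointwise (P : Matrix (Fin n) (Fin l) (ZMod 2)) (x : Fin l → ZMod 2)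
    (a s : Fin l → ZMod 2) :
    ((-1 : ℂ) ^ (x ⬝ᵥ a).val *
        Complex.exp (Complex.I * ((Real.pi/4 : ℝ):ℂ) * ∑ j, (-1 : ℂ) ^ ((P j) ⬝ᵥ a).val)) *
      (starRingEnd ℂ) ((-1 : ℂ) ^ (x ⬝ᵥ (a + s)).val *
        Complex.exp (Complex.I * ((Real.pi/4 : ℝ):ℂ) * ∑ j, (-1 : ℂ) ^ ((P j) ⬝ᵥ (a + s)).val))
    = (-1:ℂ)^((x ⬝ᵥ s).val) * Complex.I ^ hammingNorm (P.mulVec s) *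
        (-1:ℂ)^((((Pᵀ*P).mulVec s) ⬝ᵥ a).val) := by
  classical
  set θ : ℂ := ((Real.pi/4 : ℝ):ℂ) with hθ
  set f : (Fin l → ZMod 2) → ℂ := fun b => ∑ j, (-1:ℂ)^((P j ⬝ᵥ b).val) with hf
  set J : Finset (Fin n) := univ.filter (fun j => P j ⬝ᵥ s = 1) with hJ
  have hfconj : ∀ b, (starRingEnd ℂ) (f b) = f b := by
    intro b; simp [hf]
  have hconj : (starRingEnd ℂ) ((-1 : ℂ) ^ (x ⬝ᵥ (a + s)).val *
      Complex.exp (Complex.I * θ * f (a+s)))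
      = (-1 : ℂ) ^ (x ⬝ᵥ (a + s)).val * Complex.exp (-(Complex.I * θ * f (a+s))) := by
    rw [_root_.map_mul, map_pow, map_neg, _root_.map_one, ← Complex.exp_conj, _root_.map_mul,
      _root_.map_mul, Complex.conj_I, hfconj, hθ, Complex.conj_ofReal]
    ring_nf
  rw [hconj]
  have hsign : (-1:ℂ)^((x ⬝ᵥ a).val) * (-1)^((x ⬝ᵥ (a+s)).val) = (-1)^((x ⬝ᵥ s).val) := by
    rw [dotProduct_add, neg_one_val_add, ← mul_assoc]
    have : ∀ u : ZMod 2, (-1:ℂ)^u.val * (-1)^u.val = 1 := by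
      intro u; rcases zmod2_em u with h | h <;> rw [h] <;>
        norm_num [show ZMod.val (1:ZMod 2) = 1 by decide, show ZMod.val (0:ZMod 2) = 0 by decide]
    rw [this, one_mul]
  have hdiff : f a - f (a+s) = 2 * ∑ j ∈ J, (-1:ℂ)^((P j ⬝ᵥ a).val) := by
    rw [hf]
    simp only []
    rw [← Finset.sum_sub_distrib]
    rw [Finset.mul_sum, hJ, Finset.sum_filter]
    apply Finset.sum_congr rfl
    intro j _
    rw [dotProduct_add, sub_pow_ite]
  have hexp : Complex.exp (Complex.I * θ * f a) * Complex.exp (-(Complex.I * θ * f (a+s)))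
      = Complex.I ^ hammingNorm (P.mulVec s) * (-1:ℂ)^((((Pᵀ*P).mulVec s) ⬝ᵥ a).val) := by
    rw [← Complex.exp_add, show Complex.I * θ * f a + -(Complex.I * θ * f (a+s))
      = Complex.I * θ * (f a - f (a+s)) by ring, hdiff]
    have hc : Complex.I * θ * (2 * ∑ j ∈ J, (-1:ℂ)^((P j ⬝ᵥ a).val))
        = ∑ j ∈ J, Complex.I * ((Real.pi/2 : ℝ):ℂ) * (-1:ℂ)^((P j ⬝ᵥ a).val) := by
      rw [hθ]
      push_cast
      rw [Finset.mul_sum, Finset.mul_sum]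
      apply Finset.sum_congr rfl
      intro j _
      ring
    rw [hc, Complex.exp_sum]
    have : ∀ j ∈ J, Complex.exp (Complex.I * ((Real.pi/2 : ℝ):ℂ) * (-1:ℂ)^((P j ⬝ᵥ a).val))
        = Complex.I * (-1:ℂ)^((P j ⬝ᵥ a).val) := fun j _ => exp_step _
    rw [Finset.prod_congr rfl this, Finset.prod_mul_distrib, Finset.prod_const,
      prod_neg_one_val]
    congr 2
    · rw [hammingNorm_eq_card, hJ]
      congr 1
    · congr 1
      rw [← Matrix.mulVec_mulVec, Matrix.mulVec_transpose, ← Matrix.dotProduct_mulVec]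
      show ∑ j ∈ J, (P j ⬝ᵥ a) = ∑ j, (P.mulVec s j) * (P.mulVec a j)
      rw [hJ, Finset.sum_filter]
      apply Finset.sum_congr rfl
      intro j _
      exact mul_eq_ite _ _
  calc ((-1 : ℂ) ^ (x ⬝ᵥ a).val * Complex.exp (Complex.I * θ * f a)) *
        ((-1 : ℂ) ^ (x ⬝ᵥ (a + s)).val * Complex.exp (-(Complex.I * θ * f (a+s))))
      = ((-1:ℂ)^((x ⬝ᵥ a).val) * (-1)^((x ⬝ᵥ (a+s)).val)) *
        (Complex.exp (Complex.I * θ * f a) * Complex.exp (-(Complex.I * θ * f (a+s)))) := by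
        ring
    _ = _ := by rw [hsign, hexp]; ring

private lemma dot_PP (P : Matrix (Fin n) (Fin l) (ZMod 2)) (s a : Fin l → ZMod 2) :
    (P.mulVec s) ⬝ᵥ (P.mulVec a) = ((Pᵀ*P).mulVec s) ⬝ᵥ a := by
  rw [Matrix.dotProduct_mulVec, ← Matrix.mulVec_transpose, Matrix.mulVec_mulVec]

end IQPAux

/-- with `V = {s : Pᵀ·P·s = 0}` and `U = {s ∈ V : 4 ∣ |P·s|}`, at `θ = π/4`:
`ℙ[X=x] = 2^{−l} · (2|U|·[x ⊥ U] − |V|·[x ⊥ V])`. -/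

theorem iqpProb_pi_div_four_formula {n l : ℕ} (P : Matrix (Fin n) (Fin l) (ZMod 2))
    (x : Fin l → ZMod 2) :
    iqpProb P (Real.pi / 4) x =
      (2 : ℝ) ^ (-(l : ℤ)) *
        (2 * (Finset.univ.filter (fun s : Fin l → ZMod 2 =>
              (Pᵀ * P).mulVec s = 0 ∧ 4 ∣ hammingNorm (P.mulVec s))).card *
            (if ∀ u ∈ Finset.univ.filter (fun s : Fin l → ZMod 2 =>
                (Pᵀ * P).mulVec s = 0 ∧ 4 ∣ hammingNorm (P.mulVec s)), x ⬝ᵥ u = 0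
              then (1 : ℝ) else 0)
          - (Finset.univ.filter (fun s : Fin l → ZMod 2 => (Pᵀ * P).mulVec s = 0)).card *
            (if ∀ v ∈ Finset.univ.filter (fun s : Fin l → ZMod 2 =>
                (Pᵀ * P).mulVec s = 0), x ⬝ᵥ v = 0
              then (1 : ℝ) else 0)) := by
  classical
  set V : Finset (Fin l → ZMod 2) :=
    univ.filter (fun s => (Pᵀ * P).mulVec s = 0) with hV
  set U : Finset (Fin l → ZMod 2) :=
    univ.filter (fun s => (Pᵀ * P).mulVec s = 0 ∧ 4 ∣ hammingNorm (P.mulVec s)) with hU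
  have hUV : U = V.filter (fun s => 4 ∣ hammingNorm (P.mulVec s)) := by
    rw [hU, hV, Finset.filter_filter]
  -- closure properties
  have hVmem : ∀ s, s ∈ V ↔ (Pᵀ * P).mulVec s = 0 := by
    intro s; rw [hV, Finset.mem_filter]; simp
  have hVclosed : ∀ s ∈ V, ∀ t ∈ V, s + t ∈ V := by
    intro s hs t ht
    rw [hVmem] at *
    rw [Matrix.mulVec_add, hs, ht, add_zero]
  have hdot0 : ∀ s ∈ V, ∀ t : Fin l → ZMod 2, (P.mulVec s) ⬝ᵥ (P.mulVec t) = 0 := by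
    intro s hs t
    rw [dot_PP, (hVmem s).mp hs, zero_dotProduct]
  have hUmem : ∀ s, s ∈ U ↔ ((Pᵀ * P).mulVec s = 0 ∧ 4 ∣ hammingNorm (P.mulVec s)) := by
    intro s; rw [hU, Finset.mem_filter]; simp
  have hUclosed : ∀ s ∈ U, ∀ t ∈ U, s + t ∈ U := by
    intro s hs t ht
    rw [hUmem] at *
    refine ⟨by rw [Matrix.mulVec_add, hs.1, ht.1, add_zero], ?_⟩
    rw [Matrix.mulVec_add]
    exact wt_add_mod4 _ _ (hdot0 s ((hVmem s).mpr hs.1) t) hs.2 ht.2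
  -- the main complex computation
  set F : (Fin l → ZMod 2) → ℂ := fun a => (-1 : ℂ) ^ (x ⬝ᵥ a).val *
      Complex.exp (Complex.I * ((Real.pi/4 : ℝ):ℂ) * ∑ j, (-1 : ℂ) ^ ((P j) ⬝ᵥ a).val) with hF
  have hSS : (∑ a : Fin l → ZMod 2, F a) * (starRingEnd ℂ) (∑ a : Fin l → ZMod 2, F a)
      = (2:ℂ)^l * (2 * (U.card : ℂ) * (if ∀ u ∈ U, x ⬝ᵥ u = 0 then 1 else 0)
          - (V.card : ℂ) * (if ∀ v ∈ V, x ⬝ᵥ v = 0 then 1 else 0)) := by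
    rw [map_sum, Finset.sum_mul_sum]
    have step1 : ∀ a : Fin l → ZMod 2, ∑ b : Fin l → ZMod 2, F a * (starRingEnd ℂ) (F b)
        = ∑ s : Fin l → ZMod 2, (-1:ℂ)^((x ⬝ᵥ s).val) * Complex.I ^ hammingNorm (P.mulVec s) *
            (-1:ℂ)^((((Pᵀ*P).mulVec s) ⬝ᵥ a).val) := by
      intro a
      rw [← Fintype.sum_equiv (Equiv.addLeft a)
        (fun s => F a * (starRingEnd ℂ) (F (a + s)))
        (fun b => F a * (starRingEnd ℂ) (F b)) (fun s => rfl)]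
      exact Fintype.sum_congr _ _ (fun s => pointwise P x a s)
    rw [Finset.sum_congr rfl (fun a _ => step1 a), Finset.sum_comm]
    have step2 : ∀ s : Fin l → ZMod 2,
        ∑ a : Fin l → ZMod 2, (-1:ℂ)^((x ⬝ᵥ s).val) * Complex.I ^ hammingNorm (P.mulVec s) *
            (-1:ℂ)^((((Pᵀ*P).mulVec s) ⬝ᵥ a).val)
        = if (Pᵀ*P).mulVec s = 0 then
            (2:ℂ)^l * ((-1:ℂ)^((x ⬝ᵥ s).val) * Complex.I ^ hammingNorm (P.mulVec s)) else 0 := by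
      intro s
      rw [← Finset.mul_sum, sum_sign_univ, mul_ite, mul_zero, mul_comm]
    rw [Finset.sum_congr rfl (fun s _ => step2 s), ← Finset.sum_filter, ← hV, ← Finset.mul_sum]
    congr 1
    have step3 : ∀ s ∈ V, (-1:ℂ)^((x ⬝ᵥ s).val) * Complex.I ^ hammingNorm (P.mulVec s)
        = (-1:ℂ)^((x ⬝ᵥ s).val) * (if 4 ∣ hammingNorm (P.mulVec s) then 1 else -1) := by
      intro s hs
      rw [I_pow_even (wt_even _ (hdot0 s hs s))]
    rw [Finset.sum_congr rfl step3]
    have step4 : ∑ s ∈ V, (-1:ℂ)^((x ⬝ᵥ s).val) * (if 4 ∣ hammingNorm (P.mulVec s) then 1 else -1)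
        = 2 * ∑ s ∈ V.filter (fun s => 4 ∣ hammingNorm (P.mulVec s)), (-1:ℂ)^((x ⬝ᵥ s).val)
          - ∑ s ∈ V, (-1:ℂ)^((x ⬝ᵥ s).val) := by
      have h4 : ∀ s ∈ V, (-1:ℂ)^((x ⬝ᵥ s).val) * (if 4 ∣ hammingNorm (P.mulVec s) then (1:ℂ) else -1)
          = 2 * (if 4 ∣ hammingNorm (P.mulVec s) then (-1:ℂ)^((x ⬝ᵥ s).val) else 0)
            - (-1:ℂ)^((x ⬝ᵥ s).val) := by
        intro s _
        split <;> ring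
      rw [Finset.sum_congr rfl h4, Finset.sum_sub_distrib]
      congr 1
      rw [← Finset.mul_sum, ← Finset.sum_filter]
    rw [step4, ← hUV, sum_sign_subgroup x hUclosed, sum_sign_subgroup x hVclosed]
    split <;> split <;> ring
  -- conclude
  unfold iqpProb
  rw [← hF]
  have hcabs : ‖(2:ℂ) ^ (-(l : ℤ)) * ∑ a : Fin l → ZMod 2, F a‖ ^ 2
      = Complex.normSq ((2:ℂ) ^ (-(l : ℤ)) * ∑ a : Fin l → ZMod 2, F a) := Complex.sq_norm _
  rw [hcabs]
  apply Complex.ofReal_injective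
  rw [← Complex.mul_conj]
  have hc2 : (starRingEnd ℂ) ((2:ℂ) ^ (-(l : ℤ))) = (2:ℂ) ^ (-(l : ℤ)) := by
    have h2 : (starRingEnd ℂ) (2:ℂ) = 2 := Complex.conj_ofNat 2
    rw [map_zpow₀, h2]
  rw [_root_.map_mul, hc2, show ((2:ℂ) ^ (-(l : ℤ)) * ∑ a : Fin l → ZMod 2, F a) *
      ((2:ℂ) ^ (-(l : ℤ)) * (starRingEnd ℂ) (∑ a : Fin l → ZMod 2, F a))
      = ((2:ℂ) ^ (-(l : ℤ)) * (2:ℂ) ^ (-(l : ℤ))) *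
        ((∑ a : Fin l → ZMod 2, F a) * (starRingEnd ℂ) (∑ a : Fin l → ZMod 2, F a)) by ring,
    hSS]
  have hpow : ((2:ℂ) ^ (-(l : ℤ)) * (2:ℂ) ^ (-(l : ℤ))) * (2:ℂ)^l = (2:ℂ) ^ (-(l : ℤ)) := by
    rw [show ((2:ℂ)^(l:ℕ)) = (2:ℂ)^(l:ℤ) from (zpow_natCast _ _).symm,
      ← zpow_add₀ (by norm_num : (2:ℂ) ≠ 0), ← zpow_add₀ (by norm_num : (2:ℂ) ≠ 0)]
    congr 1
    ring
  rw [← mul_assoc, hpow]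
  push_cast [Complex.ofReal_zpow]
  split_ifs <;> push_cast <;> ring

end
end

section
/- Let P be an n×l binary matrix and let s, t ∈ F₂ˡ both satisfy Pᵀ·P·s = 0 and Pᵀ·P·t = 0. Then the Hamming weight of P·(s+t) is congruent to the sum of the Hamming weights of P·s and P·t modulo 4. In particular, the set U := { s : Pᵀ·P·s = 0 and 4 divides the Hamming weight of P·s } is closed under addition, hence is an F₂-linear subspace of F₂ˡ. -/
open Matrix BigOperators Finset

noncomputable section

lemma hn_sum {n : ℕ} (c : Fin n → ZMod 2) : hammingNorm c = ∑ i, (c i).val := by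
  unfold hammingNorm
  rw [Finset.card_filter]
  refine Finset.sum_congr rfl fun i _ => ?_
  have h2 : ∀ x : ZMod 2, x = 0 ∨ x = 1 := by decide
  rcases h2 (c i) with h | h <;> simp [h] <;> rfl

lemma val_add (x y : ZMod 2) : (x + y).val + 2 * (x * y).val = x.val + y.val := by
  revert x y; decide

lemma dot_zero {n l : ℕ} (P : Matrix (Fin n) (Fin l) (ZMod 2)) (s t : Fin l → ZMod 2)
    (hs : (Pᵀ * P).mulVec s = 0) : P.mulVec s ⬝ᵥ P.mulVec t = 0 := by
  rw [Matrix.dotProduct_mulVec, ← Matrix.mulVec_transpose, Matrix.mulVec_mulVec, hs]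
  simp

lemma key {n l : ℕ} (P : Matrix (Fin n) (Fin l) (ZMod 2)) (s t : Fin l → ZMod 2)
    (hs : (Pᵀ * P).mulVec s = 0) :
    hammingNorm (P.mulVec (s + t)) ≡
      hammingNorm (P.mulVec s) + hammingNorm (P.mulVec t) [MOD 4] := by
  set a := P.mulVec s with ha
  set b := P.mulVec t with hb
  have hab : P.mulVec (s + t) = a + b := by rw [Matrix.mulVec_add]
  have hdot : a ⬝ᵥ b = 0 := dot_zero P s t hs
  -- cross term even
  have hcast : ((∑ i, (a i * b i).val : ℕ) : ZMod 2) = a ⬝ᵥ b := by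
    push_cast
    simp [dotProduct, ZMod.natCast_val, ZMod.cast_id]
  have heven : (2 : ℕ) ∣ ∑ i, (a i * b i).val := by
    exact (ZMod.natCast_eq_zero_iff _ 2).mp (hcast.trans hdot)
  obtain ⟨k, hk⟩ := heven
  have hsum : hammingNorm (a + b) + 2 * ∑ i, (a i * b i).val
      = hammingNorm a + hammingNorm b := by
    rw [hn_sum, hn_sum, hn_sum, Finset.mul_sum, ← Finset.sum_add_distrib,
      ← Finset.sum_add_distrib]
    exact Finset.sum_congr rfl fun i _ => val_add (a i) (b i)
  rw [hab]
  have : hammingNorm a + hammingNorm b = hammingNorm (a + b) + 4 * k := by omega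
  rw [this]
  exact (Nat.modEq_iff_dvd' (Nat.le_add_right _ _)).mpr ⟨k, by omega⟩

/-- if `Pᵀ·P·s = 0` and `Pᵀ·P·t = 0` then
`|P·(s+t)| ≡ |P·s| + |P·t| (mod 4)`; in particular the set
`U = {s : Pᵀ·P·s = 0 ∧ 4 ∣ |P·s|}` is closed under addition. -/
theorem weight_add_mod_four {n l : ℕ} (P : Matrix (Fin n) (Fin l) (ZMod 2))
    (s t : Fin l → ZMod 2) (hs : (Pᵀ * P).mulVec s = 0) (ht : (Pᵀ * P).mulVec t = 0) :
    hammingNorm (P.mulVec (s + t)) ≡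
        hammingNorm (P.mulVec s) + hammingNorm (P.mulVec t) [MOD 4] ∧
      ∀ u v : Fin l → ZMod 2,
        ((Pᵀ * P).mulVec u = 0 ∧ 4 ∣ hammingNorm (P.mulVec u)) →
        ((Pᵀ * P).mulVec v = 0 ∧ 4 ∣ hammingNorm (P.mulVec v)) →
        ((Pᵀ * P).mulVec (u + v) = 0 ∧ 4 ∣ hammingNorm (P.mulVec (u + v))) := by
  refine ⟨key P s t hs, fun u v hu hv => ?_⟩
  constructor
  · rw [Matrix.mulVec_add, hu.1, hv.1, add_zero]
  · have h := key P u v hu.1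
    have h0 : hammingNorm (P.mulVec u) + hammingNorm (P.mulVec v) ≡ 0 [MOD 4] :=
      (Nat.modEq_zero_iff_dvd).mpr (dvd_add hu.2 hv.2)
    exact (Nat.modEq_zero_iff_dvd).mp (h.trans h0)

end
end

section
/- Let P be an n×l binary matrix with rows P₁,…,Pₙ, θ a real angle, and M an l×l binary matrix with M² = M. Let K be the kernel of M, K* the kernel of Mᵀ, R* the column space of Mᵀ, and d the F₂-dimension of R*. Then for every x ∈ F₂ˡ with M·x = x: Σ_{k∈K} ℙ[X = x+k] = 2^{−(l−d)} · Σ_{k∈K*} | 2^{−d} · Σ_{t∈R*} (−1)^{x·t} · exp( iθ · Σ_{j=1}^n (−1)^{P_j·(t+k)} ) |². -/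
open Matrix BigOperators Finset

noncomputable section

namespace IQPaux

local notation "conj" => starRingEnd ℂ

lemma sq_expand {α : Type*} (s : Finset α) (c : ℂ) (hc : conj c = c) (f : α → ℂ) :
    (c * ∑ a ∈ s, f a) * conj (c * ∑ a ∈ s, f a)
      = c * c * ∑ a ∈ s, ∑ b ∈ s, f a * conj (f b) := by
  rw [_root_.map_mul, hc, map_sum, mul_mul_mul_comm, Finset.sum_mul_sum]

lemma neg_one_pow_mod_two (m : ℕ) : (-1:ℂ)^(m % 2) = (-1)^m := by
  conv_rhs => rw [← Nat.div_add_mod m 2]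
  rw [pow_add, pow_mul]; norm_num

lemma chi_add (u v : ZMod 2) :
    ((-1:ℂ)) ^ (u+v).val = (-1:ℂ)^u.val * (-1:ℂ)^v.val := by
  rw [ZMod.val_add, neg_one_pow_mod_two, pow_add]

lemma chi_self (u : ZMod 2) : ((-1:ℂ)) ^ u.val * (-1:ℂ)^u.val = 1 := by
  rw [← pow_add, ← two_mul, pow_mul]; norm_num

lemma conj_chi (u : ZMod 2) : conj ((-1:ℂ)^u.val) = (-1:ℂ)^u.val := by
  simp

variable {l : ℕ} (M : Matrix (Fin l) (Fin l) (ZMod 2))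

lemma mem_code_iff (hM : M * M = M) (v : Fin l → ZMod 2) :
    v ∈ code M ↔ M.mulVec v = v := by
  constructor
  · rintro hv
    rw [code, Finset.mem_image] at hv
    obtain ⟨w, -, rfl⟩ := hv
    rw [mulVec_mulVec, hM]
  · intro hv
    rw [code, Finset.mem_image]
    exact ⟨v, Finset.mem_univ _, hv⟩

lemma orth_iff (hM : M * M = M) (v : Fin l → ZMod 2) :
    (∀ k, M.mulVec k = 0 → k ⬝ᵥ v = 0) ↔ Mᵀ.mulVec v = v := by
  constructor
  · intro h
    funext i
    have hk : M.mulVec (Pi.single i 1 - M.mulVec (Pi.single i 1)) = 0 := by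
      rw [mulVec_sub, mulVec_mulVec, hM, sub_self]
    have h2 := h _ hk
    rw [sub_dotProduct, single_dotProduct, one_mul, sub_eq_zero,
      mulVec_single_one] at h2
    rw [mulVec, h2]; rfl
  · intro h k hk
    calc k ⬝ᵥ v = k ⬝ᵥ Mᵀ.mulVec v := by rw [h]
    _ = 0 := by rw [dotProduct_mulVec, vecMul_transpose, hk, zero_dotProduct]

lemma card_ker :
    ((Finset.univ.filter (fun k : Fin l → ZMod 2 => M.mulVec k = 0)).card) * 2 ^ Mᵀ.rank
      = 2 ^ l := by
  classical
  rw [Matrix.rank_transpose]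
  have h1 : (Finset.univ.filter (fun k : Fin l → ZMod 2 => M.mulVec k = 0)).card
      = Fintype.card (LinearMap.ker M.mulVecLin) := by
    rw [Fintype.card_subtype]
    congr 1
    apply Finset.filter_congr
    intro k _
    simp [LinearMap.mem_ker]
  have h2 : Fintype.card (LinearMap.ker M.mulVecLin)
      = 2 ^ Module.finrank (ZMod 2) (LinearMap.ker M.mulVecLin) := by
    have := Module.card_eq_pow_finrank (K := ZMod 2) (V := LinearMap.ker M.mulVecLin)
    rwa [ZMod.card] at this
  have h3 : Matrix.rank M = Module.finrank (ZMod 2) (LinearMap.range M.mulVecLin) := rfl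
  rw [h1, h2, h3, ← pow_add, add_comm, LinearMap.finrank_range_add_finrank_ker,
    Module.finrank_pi]
  simp

lemma char_sum_full (hM : M * M = M) (v : Fin l → ZMod 2) :
    ∑ k ∈ Finset.univ.filter (fun k : Fin l → ZMod 2 => M.mulVec k = 0),
      (-1:ℂ) ^ ((k ⬝ᵥ v).val)
    = if Mᵀ.mulVec v = v
        then (((Finset.univ.filter (fun k : Fin l → ZMod 2 => M.mulVec k = 0)).card : ℕ) : ℂ)
        else 0 := by
  by_cases h : Mᵀ.mulVec v = v
  · rw [if_pos h]
    rw [Finset.sum_congr rfl (fun k hk => ?_), Finset.sum_const, nsmul_eq_mul, mul_one]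
    have hk0 : k ⬝ᵥ v = 0 := (orth_iff M hM v).mpr h k (Finset.mem_filter.mp hk).2
    rw [hk0]
    norm_num
  · rw [if_neg h]
    have : ¬ ∀ k, M.mulVec k = 0 → k ⬝ᵥ v = 0 := fun hh => h ((orth_iff M hM v).mp hh)
    push_neg at this
    obtain ⟨k₀, hk₀, hk₀v'⟩ := this
    have hk₀v : k₀ ⬝ᵥ v = 1 := by
      have hzz : ∀ a : ZMod 2, a ≠ 0 → a = 1 := by decide
      exact hzz _ hk₀v'
    have hk₀ne : k₀ ≠ 0 := by
      intro hh; rw [hh, zero_dotProduct] at hk₀v; exact one_ne_zero hk₀v.symm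
    have g_mem : ∀ a ∈ Finset.univ.filter (fun k : Fin l → ZMod 2 => M.mulVec k = 0),
        a + k₀ ∈ Finset.univ.filter (fun k : Fin l → ZMod 2 => M.mulVec k = 0) := by
      intro a ha
      rw [Finset.mem_filter] at *
      exact ⟨Finset.mem_univ _, by rw [mulVec_add, ha.2, hk₀, add_zero]⟩
    apply Finset.sum_involution (g := fun a _ => a + k₀) _ _ g_mem
    · intro a ha
      rw [add_assoc]
      have : k₀ + k₀ = 0 := by funext j; exact CharTwo.add_self_eq_zero _
      rw [this, add_zero]
    · intro a ha
      have h1 : (a + k₀) ⬝ᵥ v = a ⬝ᵥ v + 1 := by rw [add_dotProduct, hk₀v]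
      rw [h1, chi_add]
      have h2 : ((1 : ZMod 2)).val = 1 := rfl
      rw [h2, pow_one, mul_neg_one, add_neg_cancel]
    · intro a ha _ hh
      exact hk₀ne (by rwa [add_eq_left] at hh)

lemma key (hM : M * M = M) (x : Fin l → ZMod 2) (F : (Fin l → ZMod 2) → ℂ) :
    ∑ k ∈ Finset.univ.filter (fun k : Fin l → ZMod 2 => M.mulVec k = 0),
      (((2:ℂ)^(-(l:ℤ)) * ∑ a : Fin l → ZMod 2, (-1:ℂ)^(((x+k) ⬝ᵥ a).val) * F a)
        * conj ((2:ℂ)^(-(l:ℤ)) * ∑ a : Fin l → ZMod 2, (-1:ℂ)^(((x+k) ⬝ᵥ a).val) * F a))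
    = (2:ℂ)^(-((l:ℤ) - (Mᵀ.rank:ℤ))) *
      ∑ k ∈ Finset.univ.filter (fun k : Fin l → ZMod 2 => Mᵀ.mulVec k = 0),
        (((2:ℂ)^(-(Mᵀ.rank:ℤ)) * ∑ t ∈ code Mᵀ, (-1:ℂ)^((x ⬝ᵥ t).val) * F (t+k))
          * conj ((2:ℂ)^(-(Mᵀ.rank:ℤ)) * ∑ t ∈ code Mᵀ, (-1:ℂ)^((x ⬝ᵥ t).val) * F (t+k))) := by
  classical
  have hMT : Mᵀ * Mᵀ = Mᵀ := by rw [← transpose_mul, hM]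
  have hself : ∀ u : Fin l → ZMod 2, u + u = 0 := by
    intro u; funext j; exact CharTwo.add_self_eq_zero _
  set K := Finset.univ.filter (fun k : Fin l → ZMod 2 => M.mulVec k = 0) with hK
  set Ks := Finset.univ.filter (fun k : Fin l → ZMod 2 => Mᵀ.mulVec k = 0) with hKs
  set C := code Mᵀ with hC
  set d := Mᵀ.rank with hd
  set cK := K.card with hcK
  set g : (Fin l → ZMod 2) → (Fin l → ZMod 2) → ℂ :=
    fun a b => (-1:ℂ)^((x ⬝ᵥ a).val) * (-1:ℂ)^((x ⬝ᵥ b).val) * (F a * conj (F b)) with hg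
  have hc2 : ∀ z : ℤ, conj ((2:ℂ)^z) = (2:ℂ)^z := by
    intro z; rw [map_zpow₀, Complex.conj_ofNat]
  set A := (Finset.univ ×ˢ Finset.univ).filter
    (fun p : (Fin l → ZMod 2) × (Fin l → ZMod 2) => Mᵀ.mulVec (p.1 + p.2) = p.1 + p.2) with hA
  set B := Ks ×ˢ (C ×ˢ C) with hB
  -- LHS transformation
  have L1 : ∑ k ∈ K,
      (((2:ℂ)^(-(l:ℤ)) * ∑ a : Fin l → ZMod 2, (-1:ℂ)^(((x+k) ⬝ᵥ a).val) * F a)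
        * conj ((2:ℂ)^(-(l:ℤ)) * ∑ a : Fin l → ZMod 2, (-1:ℂ)^(((x+k) ⬝ᵥ a).val) * F a))
      = (2:ℂ)^(-(l:ℤ)) * (2:ℂ)^(-(l:ℤ)) * ∑ k ∈ K, ∑ a : Fin l → ZMod 2,
          ∑ b : Fin l → ZMod 2, g a b * (-1:ℂ)^((k ⬝ᵥ (a+b)).val) := by
    rw [Finset.mul_sum]
    refine Finset.sum_congr rfl fun k _ => ?_
    rw [sq_expand _ _ (hc2 _)]
    congr 1
    refine Finset.sum_congr rfl fun a _ => Finset.sum_congr rfl fun b _ => ?_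
    rw [_root_.map_mul, conj_chi]
    simp only [hg]
    have e1 : (x + k) ⬝ᵥ a = x ⬝ᵥ a + k ⬝ᵥ a := by rw [add_dotProduct]
    have e2 : (x + k) ⬝ᵥ b = x ⬝ᵥ b + k ⬝ᵥ b := by rw [add_dotProduct]
    have e3 : k ⬝ᵥ (a + b) = k ⬝ᵥ a + k ⬝ᵥ b := by rw [dotProduct_add]
    rw [e1, e2, e3, chi_add, chi_add, chi_add]
    ring
  have L2 : ∑ k ∈ K, ∑ a : Fin l → ZMod 2, ∑ b : Fin l → ZMod 2,
        g a b * (-1:ℂ)^((k ⬝ᵥ (a+b)).val)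
      = (cK : ℂ) * ∑ p ∈ A, g p.1 p.2 := by
    rw [Finset.sum_comm]
    calc ∑ a : Fin l → ZMod 2, ∑ k ∈ K, ∑ b : Fin l → ZMod 2,
          g a b * (-1:ℂ)^((k ⬝ᵥ (a+b)).val)
        = ∑ a : Fin l → ZMod 2, ∑ b : Fin l → ZMod 2,
            g a b * ∑ k ∈ K, (-1:ℂ)^((k ⬝ᵥ (a+b)).val) := by
          refine Finset.sum_congr rfl fun a _ => ?_
          rw [Finset.sum_comm]
          exact Finset.sum_congr rfl fun b _ => (Finset.mul_sum _ _ _).symm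
      _ = ∑ a : Fin l → ZMod 2, ∑ b : Fin l → ZMod 2,
            (if Mᵀ.mulVec (a+b) = a+b then g a b * (cK:ℂ) else 0) := by
          refine Finset.sum_congr rfl fun a _ => Finset.sum_congr rfl fun b _ => ?_
          rw [char_sum_full M hM (a+b), mul_ite, mul_zero]
      _ = ∑ p ∈ Finset.univ ×ˢ Finset.univ,
            (if Mᵀ.mulVec (p.1+p.2) = p.1+p.2 then g p.1 p.2 * (cK:ℂ) else 0) := by
          rw [Finset.sum_product]
      _ = ∑ p ∈ A, g p.1 p.2 * (cK:ℂ) := (Finset.sum_filter _ _).symm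
      _ = (cK : ℂ) * ∑ p ∈ A, g p.1 p.2 := by
          rw [Finset.mul_sum]
          exact Finset.sum_congr rfl fun _ _ => mul_comm _ _
  -- RHS transformation
  have R1 : ∑ k ∈ Ks,
      (((2:ℂ)^(-(d:ℤ)) * ∑ t ∈ C, (-1:ℂ)^((x ⬝ᵥ t).val) * F (t+k))
        * conj ((2:ℂ)^(-(d:ℤ)) * ∑ t ∈ C, (-1:ℂ)^((x ⬝ᵥ t).val) * F (t+k)))
      = (2:ℂ)^(-(d:ℤ)) * (2:ℂ)^(-(d:ℤ)) * ∑ q ∈ B, g (q.2.1 + q.1) (q.2.2 + q.1) := by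
    rw [hB, Finset.sum_product, Finset.mul_sum]
    refine Finset.sum_congr rfl fun k hk => ?_
    rw [sq_expand _ _ (hc2 _), Finset.sum_product]
    congr 1
    refine Finset.sum_congr rfl fun t ht => Finset.sum_congr rfl fun s hs => ?_
    rw [_root_.map_mul, conj_chi]
    simp only [hg]
    have e1 : x ⬝ᵥ (t + k) = x ⬝ᵥ t + x ⬝ᵥ k := by rw [dotProduct_add]
    have e2 : x ⬝ᵥ (s + k) = x ⬝ᵥ s + x ⬝ᵥ k := by rw [dotProduct_add]
    rw [e1, e2, chi_add, chi_add]
    linear_combination (-((-1:ℂ)^((x ⬝ᵥ t).val) * (-1:ℂ)^((x ⬝ᵥ s).val) *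
      (F (t+k) * conj (F (s+k))))) * chi_self (x ⬝ᵥ k)
  -- the bijection
  have keyA : ∀ p : (Fin l → ZMod 2) × (Fin l → ZMod 2), p ∈ A →
      Mᵀ.mulVec p.1 + (p.1 + Mᵀ.mulVec p.1) = p.1 ∧
      Mᵀ.mulVec p.2 + (p.1 + Mᵀ.mulVec p.1) = p.2 := by
    intro p hp
    have hcond : Mᵀ.mulVec p.1 + Mᵀ.mulVec p.2 = p.1 + p.2 := by
      have := (Finset.mem_filter.mp hp).2
      rwa [mulVec_add] at this
    constructor
    · calc Mᵀ.mulVec p.1 + (p.1 + Mᵀ.mulVec p.1)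
          = p.1 + (Mᵀ.mulVec p.1 + Mᵀ.mulVec p.1) := by abel
      _ = p.1 := by rw [hself, add_zero]
    · calc Mᵀ.mulVec p.2 + (p.1 + Mᵀ.mulVec p.1)
          = (Mᵀ.mulVec p.1 + Mᵀ.mulVec p.2) + p.1 := by abel
      _ = (p.1 + p.2) + p.1 := by rw [hcond]
      _ = p.2 + (p.1 + p.1) := by abel
      _ = p.2 := by rw [hself, add_zero]
  have bij : ∑ p ∈ A, g p.1 p.2 = ∑ q ∈ B, g (q.2.1 + q.1) (q.2.2 + q.1) := by
    refine Finset.sum_nbij'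
      (i := fun p => (p.1 + Mᵀ.mulVec p.1, (Mᵀ.mulVec p.1, Mᵀ.mulVec p.2)))
      (j := fun q => (q.2.1 + q.1, q.2.2 + q.1)) ?_ ?_ ?_ ?_ ?_
    · intro p hp
      rw [hB, Finset.mem_product]
      constructor
      · rw [hKs, Finset.mem_filter]
        refine ⟨Finset.mem_univ _, ?_⟩
        rw [mulVec_add, mulVec_mulVec, hMT, hself]
      · rw [Finset.mem_product]
        exact ⟨Finset.mem_image.mpr ⟨p.1, Finset.mem_univ _, rfl⟩,
          Finset.mem_image.mpr ⟨p.2, Finset.mem_univ _, rfl⟩⟩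
    · intro q hq
      rw [hB, Finset.mem_product, Finset.mem_product] at hq
      have hq1 := hq.1
      have hq2 := hq.2.1
      have hq3 := hq.2.2
      have hk : Mᵀ.mulVec q.1 = 0 := (Finset.mem_filter.mp hq1).2
      have ht : Mᵀ.mulVec q.2.1 = q.2.1 := (mem_code_iff Mᵀ hMT _).mp hq2
      have hs : Mᵀ.mulVec q.2.2 = q.2.2 := (mem_code_iff Mᵀ hMT _).mp hq3
      rw [hA, Finset.mem_filter]
      refine ⟨Finset.mem_product.mpr ⟨Finset.mem_univ _, Finset.mem_univ _⟩, ?_⟩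
      have hsum : (q.2.1 + q.1) + (q.2.2 + q.1) = q.2.1 + q.2.2 := by
        calc (q.2.1 + q.1) + (q.2.2 + q.1) = (q.2.1 + q.2.2) + (q.1 + q.1) := by abel
        _ = q.2.1 + q.2.2 := by rw [hself, add_zero]
      rw [hsum, mulVec_add, ht, hs]
    · intro p hp
      obtain ⟨e1, e2⟩ := keyA p hp
      exact Prod.ext e1 e2
    · intro q hq
      rw [hB, Finset.mem_product, Finset.mem_product] at hq
      have hq1 := hq.1
      have hq2 := hq.2.1
      have hq3 := hq.2.2
      have hk : Mᵀ.mulVec q.1 = 0 := (Finset.mem_filter.mp hq1).2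
      have ht : Mᵀ.mulVec q.2.1 = q.2.1 := (mem_code_iff Mᵀ hMT _).mp hq2
      have hs : Mᵀ.mulVec q.2.2 = q.2.2 := (mem_code_iff Mᵀ hMT _).mp hq3
      have et : Mᵀ.mulVec (q.2.1 + q.1) = q.2.1 := by rw [mulVec_add, ht, hk, add_zero]
      have es : Mᵀ.mulVec (q.2.2 + q.1) = q.2.2 := by rw [mulVec_add, hs, hk, add_zero]
      have ek : (q.2.1 + q.1) + q.2.1 = q.1 := by
        calc (q.2.1 + q.1) + q.2.1 = q.1 + (q.2.1 + q.2.1) := by abel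
        _ = q.1 := by rw [hself, add_zero]
      refine Prod.ext ?_ ?_
      · show (q.2.1 + q.1) + Mᵀ.mulVec (q.2.1 + q.1) = q.1
        rw [et, ek]
      · show (Mᵀ.mulVec (q.2.1 + q.1), Mᵀ.mulVec (q.2.2 + q.1)) = q.2
        rw [et, es]
    · intro p hp
      obtain ⟨e1, e2⟩ := keyA p hp
      show g p.1 p.2 = g (Mᵀ.mulVec p.1 + (p.1 + Mᵀ.mulVec p.1))
        (Mᵀ.mulVec p.2 + (p.1 + Mᵀ.mulVec p.1))
      rw [e1, e2]
  -- power bookkeeping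
  have h2 : (2:ℂ) ≠ 0 := two_ne_zero
  have hcards : (cK:ℂ) * (2:ℂ)^(d:ℕ) = (2:ℂ)^(l:ℕ) := by
    have := card_ker M
    rw [← hcK, ← hd] at this
    exact_mod_cast congrArg (Nat.cast : ℕ → ℂ) this
  have hcK2 : (cK:ℂ) = (2:ℂ)^((l:ℤ) - (d:ℤ)) := by
    rw [zpow_sub₀ h2, zpow_natCast, zpow_natCast, eq_div_iff (pow_ne_zero _ h2)]
    exact hcards
  rw [L1, L2, R1, bij, hcK2, ← mul_assoc, ← mul_assoc]
  congr 1
  rw [← zpow_add₀ h2, ← zpow_add₀ h2, ← zpow_add₀ h2, ← zpow_add₀ h2]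
  congr 1
  ring

end IQPaux

/-- with `K = ker M`, `K* = ker Mᵀ`, `R* = col space of Mᵀ`, `d = dim R*`,
for `x` in the range of `M`:
`Σ_{k∈K} ℙ[X=x+k] = 2^{−(l−d)} · Σ_{k∈K*} |2^{−d} Σ_{t∈R*} (−1)^{x·t} exp(iθ Σ_j (−1)^{P_j·(t+k)})|²`. -/
theorem marginal_as_mixture {n l : ℕ} (P : Matrix (Fin n) (Fin l) (ZMod 2)) (θ : ℝ)
    (M : Matrix (Fin l) (Fin l) (ZMod 2)) (hM : M * M = M)
    (x : Fin l → ZMod 2) (hx : M.mulVec x = x) :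
    ∑ k ∈ Finset.univ.filter (fun k : Fin l → ZMod 2 => M.mulVec k = 0),
        iqpProb P θ (x + k) =
      (2 : ℝ) ^ (-((l : ℤ) - (Mᵀ.rank : ℤ))) *
        ∑ k ∈ Finset.univ.filter (fun k : Fin l → ZMod 2 => Mᵀ.mulVec k = 0),
          ‖(2 : ℂ) ^ (-(Mᵀ.rank : ℤ)) *
            ∑ t ∈ code Mᵀ, (-1 : ℂ) ^ (x ⬝ᵥ t).val *
              Complex.exp (Complex.I * θ *
                ∑ j, (-1 : ℂ) ^ ((P j) ⬝ᵥ (t + k)).val)‖ ^ 2 := by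
  have habs : ∀ z : ℂ, ((‖z‖ : ℂ)) ^ 2 = z * (starRingEnd ℂ) z := fun z => by
    rw [← Complex.ofReal_pow, Complex.sq_norm, Complex.mul_conj]
  apply Complex.ofReal_injective
  simp only [iqpProb]
  push_cast
  rw [Finset.sum_congr rfl (fun k _ => habs _), Finset.sum_congr rfl (fun k _ => habs _)]
  exact IQPaux.key M hM x (fun a => Complex.exp (Complex.I * θ * ∑ j, (-1:ℂ)^((P j ⬝ᵥ a).val)))

end
end
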